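/- arXiv:2102.10226 — 8 statements merged into one kernel-verified Lean document; each statement's English description precedes it below -/
import Mathlib

section
/- Let n, M ≥ 1. Let Q_*(1),…,Q_*(M) be nonzero symmetric n×n real matrices, and for each m let U_m ∈ ℝ^{n×K_m} have orthonormal columns spanning the column space of Q_*(m); set Π_{U_m⊥} = I − U_m U_mᵀ. Define L₁ = {X ∈ ℝ^{M×n×n} : Π_{U_m⊥} X(m) Π_{U_m⊥} = 0 for all m} and L₂ = {Q_* ×₁ X : X ∈ ℝ^{M×M} skew-symmetric}, where (Q_* ×₁ X)(m) = Σ_{m'=1}^M X(m,m') Q_*(m'). Suppose that for every m ∈ {1,…,M}, the M−1 matrices {Π_{U_m⊥} Q_*(m') Π_{U_m⊥} : m' ≠ m} are linearly independent in ℝ^{n×n}. Then L₁ ∩ L₂ = {0}; equivalently, the only skew-symmetric X ∈ ℝ^{M×M} with Q_* ×₁ X ∈ L₁ is X = 0. -/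
open Matrix BigOperators

/-- Frobenius norm of a real matrix. -/
noncomputable def frobNorm {a b : ℕ} (X : Matrix (Fin a) (Fin b) ℝ) : ℝ :=
  Real.sqrt (∑ i, ∑ j, (X i j) ^ 2)

/-- Spectral (operator) norm of a real matrix. -/
noncomputable def specNorm {a b : ℕ} (X : Matrix (Fin a) (Fin b) ℝ) : ℝ :=
  ‖LinearMap.toContinuousLinearMap (Matrix.toEuclideanLin X)‖

/-- Mode-1 product of a tensor `X ∈ ℝ^{J×n×n}` with `B ∈ ℝ^{J'×J}`:
`(X ×₁ B)(j') = Σ_j B(j',j) X(j)`. -/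
noncomputable def mode1 {J J' n : ℕ} (X : Fin J → Matrix (Fin n) (Fin n) ℝ)
    (B : Matrix (Fin J') (Fin J) ℝ) : Fin J' → Matrix (Fin n) (Fin n) ℝ :=
  fun j' => ∑ j, B j' j • X j

/-- Mode-(2,3) product: `(X ×_{2,3} Y)(i,j) = Tr(X(i) Y(j)ᵀ)`. -/
noncomputable def prod23 {J J' n : ℕ} (X : Fin J → Matrix (Fin n) (Fin n) ℝ)
    (Y : Fin J' → Matrix (Fin n) (Fin n) ℝ) : Matrix (Fin J) (Fin J') ℝ :=
  Matrix.of fun i j => ((X i) * (Y j)ᵀ).trace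

/-- Frobenius norm of a tensor. -/
noncomputable def tFrobNorm {J n : ℕ} (X : Fin J → Matrix (Fin n) (Fin n) ℝ) : ℝ :=
  Real.sqrt (∑ j, ∑ a, ∑ b, (X j a b) ^ 2)

/-- Tensor operator norm:
`‖X‖ = sup{Σ_{j,a,b} X(j,a,b) u_j v_a w_b : ‖u‖=‖v‖=‖w‖=1}`. -/
noncomputable def tOpNorm {J n : ℕ} (X : Fin J → Matrix (Fin n) (Fin n) ℝ) : ℝ :=
  sSup { c | ∃ (u : EuclideanSpace ℝ (Fin J)) (v w : EuclideanSpace ℝ (Fin n)),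
    ‖u‖ = 1 ∧ ‖v‖ = 1 ∧ ‖w‖ = 1 ∧ c = ∑ j, ∑ a, ∑ b, X j a b * u j * v a * w b }

/-- Slice-wise projection `X(j) ↦ X(j) − P X(j) P` applied to every slice of a tensor. -/
noncomputable def piT {J n : ℕ} (P : Matrix (Fin n) (Fin n) ℝ)
    (X : Fin J → Matrix (Fin n) (Fin n) ℝ) : Fin J → Matrix (Fin n) (Fin n) ℝ :=
  fun j => X j - P * X j * P

lemma projQ_aux {n K : ℕ} (U : Matrix (Fin n) (Fin K) ℝ) (Q : Matrix (Fin n) (Fin n) ℝ)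
    (hUo : Uᵀ * U = 1)
    (hspan : Submodule.span ℝ (Set.range fun k => Uᵀ k) =
      Submodule.span ℝ (Set.range fun j => Qᵀ j)) :
    (1 - U * Uᵀ) * Q = 0 := by
  have hker : ∀ v ∈ Submodule.span ℝ (Set.range fun j => Qᵀ j),
      (1 - U * Uᵀ).mulVec v = 0 := by
    intro v hv
    rw [← hspan] at hv
    have : v ∈ LinearMap.range (Matrix.mulVecLin U) := by
      rwa [Matrix.range_mulVecLin]
    obtain ⟨c, rfl⟩ := this
    simp only [Matrix.mulVecLin_apply, Matrix.mulVec_mulVec]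
    rw [Matrix.sub_mul, Matrix.one_mul, Matrix.mul_assoc, hUo, Matrix.mul_one, sub_self,
      Matrix.zero_mulVec]
  ext i j
  have h := congrFun (hker (Qᵀ j) (Submodule.subset_span ⟨j, rfl⟩)) i
  simpa [Matrix.mulVec, Matrix.mul_apply, dotProduct] using h


/-- Sufficient condition (A1(a)) for the trivial intersection of the
tangent spaces `L₁` and `L₂`. -/
theorem stmt0 {n M : ℕ} (hn : 1 ≤ n) (hM : 1 ≤ M)
    (K : Fin M → ℕ) (Q : Fin M → Matrix (Fin n) (Fin n) ℝ)
    (hQsymm : ∀ m, (Q m)ᵀ = Q m) (hQne : ∀ m, Q m ≠ 0)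
    (U : ∀ m : Fin M, Matrix (Fin n) (Fin (K m)) ℝ)
    (hUo : ∀ m, (U m)ᵀ * U m = 1)
    (hUspan : ∀ m, Submodule.span ℝ (Set.range fun k => (U m)ᵀ k) =
      Submodule.span ℝ (Set.range fun j => (Q m)ᵀ j))
    (hindep : ∀ m : Fin M, LinearIndependent ℝ
      (fun m' : {m' : Fin M // m' ≠ m} =>
        (1 - U m * (U m)ᵀ) * Q m' * (1 - U m * (U m)ᵀ))) :
    {X : Fin M → Matrix (Fin n) (Fin n) ℝ |
        ∀ m, (1 - U m * (U m)ᵀ) * X m * (1 - U m * (U m)ᵀ) = 0} ∩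
      {X | ∃ V : Matrix (Fin M) (Fin M) ℝ, Vᵀ = -V ∧ X = mode1 Q V} = {0} := by
  have hPm : ∀ m, (1 - U m * (U m)ᵀ) * Q m * (1 - U m * (U m)ᵀ) = 0 := by
    intro m
    rw [projQ_aux (U m) (Q m) (hUo m) (hUspan m), Matrix.zero_mul]
  ext X
  simp only [Set.mem_inter_iff, Set.mem_setOf_eq, Set.mem_singleton_iff]
  constructor
  · rintro ⟨h1, V, hskew, rfl⟩
    have hVoff : ∀ m m' : Fin M, m' ≠ m → V m m' = 0 := by
      intro m
      set P := (1 - U m * (U m)ᵀ) with hP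
      have hexp : P * (mode1 Q V m) * P = ∑ m' : Fin M, V m m' • (P * Q m' * P) := by
        simp [mode1, Finset.mul_sum, Finset.sum_mul, Matrix.mul_smul, Matrix.smul_mul]
      have h0 : ∑ m' : Fin M, V m m' • (P * Q m' * P) = 0 := by
        rw [← hexp]; exact h1 m
      have h2 : ∑ m' ∈ Finset.univ.erase m, V m m' • (P * Q m' * P) = 0 := by
        have h3 := Finset.add_sum_erase Finset.univ
          (fun m' => V m m' • (P * Q m' * P)) (Finset.mem_univ m)
        simp only [show P * Q m * P = 0 from hPm m, smul_zero, zero_add] at h3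
        rw [h3]; exact h0
      have h4 : ∑ m' : {m' : Fin M // m' ≠ m}, V m m'.1 • (P * Q m'.1 * P) = 0 := by
        rw [← Finset.sum_subtype (Finset.univ.erase m)
          (fun x => by simp [Finset.mem_erase]) (fun m' => V m m' • (P * Q m' * P))]
        exact h2
      have h5 := Fintype.linearIndependent_iff.mp (hindep m) (fun m' => V m m'.1) h4
      intro m' hm'
      exact h5 ⟨m', hm'⟩
    have hV : V = 0 := by
      ext i j
      simp only [Matrix.zero_apply]
      by_cases h : j = i
      · subst h
        have h6 := congrFun (congrFun hskew j) j
        simp only [Matrix.transpose_apply, Matrix.neg_apply] at h6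
        linarith
      · exact hVoff i j h
    rw [hV]
    funext m
    simp [mode1]
  · rintro rfl
    exact ⟨fun m => by simp, 0, by simp, by funext m; simp [mode1]⟩
end

section
/- Let W_*, Ŵ ∈ ℝ^{L×M} each have orthonormal columns, let Q_* ∈ ℝ^{M×n×n} have slices of rank at most K_m, let P_* = Q_* ×₁ W_* (slices P_*(l) = Σ_m W_*(l,m) Q_*(m)), let A ∈ ℝ^{L×n×n} be arbitrary and Δ = A − P_*. Fix m ∈ {1,…,M}, set D = Σ_l Ŵ(l,m) A(l) ∈ ℝ^{n×n}, and let Q̂ be any matrix of rank at most K_m satisfying ‖D − Q̂‖ ≤ ‖D − Z‖ (spectral norm) for every Z of rank at most K_m. Then ‖Q̂ − Q_*(m)‖ ≤ 2‖Q_*‖·‖Ŵ − W_*‖_F + 2‖Δ‖, where ‖Q_*‖ and ‖Δ‖ denote tensor operator norms. -/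
open Matrix BigOperators

open scoped RealInnerProductSpace
open scoped InnerProductSpace

lemma coord_le {k : ℕ} (u : EuclideanSpace ℝ (Fin k)) (j : Fin k) : |u j| ≤ ‖u‖ := by
  rw [EuclideanSpace.norm_eq]
  calc |u j| = Real.sqrt (‖u j‖ ^ 2) := by
        rw [Real.sqrt_sq_eq_abs]; simp [abs_abs]
    _ ≤ _ := by
        apply Real.sqrt_le_sqrt
        exact Finset.single_le_sum (f := fun i => ‖u i‖ ^ 2)
          (fun i _ => by positivity) (Finset.mem_univ j)

lemma tOpNorm_bdd {J n : ℕ} (X : Fin J → Matrix (Fin n) (Fin n) ℝ) :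
    BddAbove { c | ∃ (u : EuclideanSpace ℝ (Fin J)) (v w : EuclideanSpace ℝ (Fin n)),
    ‖u‖ = 1 ∧ ‖v‖ = 1 ∧ ‖w‖ = 1 ∧ c = ∑ j, ∑ a, ∑ b, X j a b * u j * v a * w b } := by
  refine ⟨∑ j, ∑ a, ∑ b, |X j a b|, ?_⟩
  rintro c ⟨u, v, w, hu, hv, hw, rfl⟩
  calc (∑ j, ∑ a, ∑ b, X j a b * u j * v a * w b)
      ≤ ∑ j, ∑ a, ∑ b, |X j a b * u j * v a * w b| := by
        apply Finset.sum_le_sum; intro j _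
        apply Finset.sum_le_sum; intro a _
        apply Finset.sum_le_sum; intro b _
        exact le_abs_self _
    _ ≤ ∑ j, ∑ a, ∑ b, |X j a b| := by
        apply Finset.sum_le_sum; intro j _
        apply Finset.sum_le_sum; intro a _
        apply Finset.sum_le_sum; intro b _
        rw [abs_mul, abs_mul, abs_mul]
        calc |X j a b| * |u j| * |v a| * |w b|
            ≤ |X j a b| * 1 * 1 * 1 := by
              gcongr
              · exact (coord_le u j).trans hu.le
              · exact (coord_le v a).trans hv.le
              · exact (coord_le w b).trans hw.le
          _ = |X j a b| := by ring

lemma tOpNorm_nonneg {J n : ℕ} (X : Fin J → Matrix (Fin n) (Fin n) ℝ) :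
    0 ≤ tOpNorm X := by
  rcases Set.eq_empty_or_nonempty { c | ∃ (u : EuclideanSpace ℝ (Fin J)) (v w : EuclideanSpace ℝ (Fin n)),
    ‖u‖ = 1 ∧ ‖v‖ = 1 ∧ ‖w‖ = 1 ∧ c = ∑ j, ∑ a, ∑ b, X j a b * u j * v a * w b } with h | h
  · rw [tOpNorm, h, Real.sSup_empty]
  · obtain ⟨c, u, v, w, hu, hv, hw, hc⟩ := h
    have hneg : (-c) ∈ { c | ∃ (u : EuclideanSpace ℝ (Fin J)) (v w : EuclideanSpace ℝ (Fin n)),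
        ‖u‖ = 1 ∧ ‖v‖ = 1 ∧ ‖w‖ = 1 ∧ c = ∑ j, ∑ a, ∑ b, X j a b * u j * v a * w b } := by
      refine ⟨-u, v, w, by simpa using hu, hv, hw, ?_⟩
      rw [hc, ← Finset.sum_neg_distrib]
      congr 1; ext j
      rw [← Finset.sum_neg_distrib]
      congr 1; ext a
      rw [← Finset.sum_neg_distrib]
      congr 1; ext b
      simp only [PiLp.neg_apply]; ring
    rcases le_or_gt 0 c with h0 | h0
    · exact h0.trans (le_csSup (tOpNorm_bdd X) ⟨u, v, w, hu, hv, hw, hc⟩)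
    · exact (by linarith : (0:ℝ) ≤ -c).trans (le_csSup (tOpNorm_bdd X) hneg)

lemma S_scale {J n : ℕ} (X : Fin J → Matrix (Fin n) (Fin n) ℝ)
    (u : EuclideanSpace ℝ (Fin J)) (v w : EuclideanSpace ℝ (Fin n)) (a b c : ℝ) :
    ∑ j, ∑ p, ∑ q, X j p q * (a • u) j * (b • v) p * (c • w) q
      = (a * b * c) * ∑ j, ∑ p, ∑ q, X j p q * u j * v p * w q := by
  rw [Finset.mul_sum]
  refine Finset.sum_congr rfl fun j _ => ?_
  rw [Finset.mul_sum]
  refine Finset.sum_congr rfl fun p _ => ?_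
  rw [Finset.mul_sum]
  refine Finset.sum_congr rfl fun q _ => ?_
  simp only [PiLp.smul_apply, smul_eq_mul]
  ring

lemma S_le {J n : ℕ} (X : Fin J → Matrix (Fin n) (Fin n) ℝ)
    (u : EuclideanSpace ℝ (Fin J)) (v w : EuclideanSpace ℝ (Fin n)) :
    ∑ j, ∑ a, ∑ b, X j a b * u j * v a * w b ≤ ‖u‖ * ‖v‖ * ‖w‖ * tOpNorm X := by
  rcases eq_or_ne u 0 with rfl | hu
  · simp [tOpNorm_nonneg X]
  rcases eq_or_ne v 0 with rfl | hv
  · simp [tOpNorm_nonneg X, mul_nonneg, norm_nonneg]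
  rcases eq_or_ne w 0 with rfl | hw
  · simp [tOpNorm_nonneg X, mul_nonneg, norm_nonneg]
  have hu' : ‖u‖ ≠ 0 := norm_ne_zero_iff.mpr hu
  have hv' : ‖v‖ ≠ 0 := norm_ne_zero_iff.mpr hv
  have hw' : ‖w‖ ≠ 0 := norm_ne_zero_iff.mpr hw
  have hmem : ((‖u‖⁻¹ * ‖v‖⁻¹ * ‖w‖⁻¹) * ∑ j, ∑ a, ∑ b, X j a b * u j * v a * w b)
      ∈ { c | ∃ (u : EuclideanSpace ℝ (Fin J)) (v w : EuclideanSpace ℝ (Fin n)),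
      ‖u‖ = 1 ∧ ‖v‖ = 1 ∧ ‖w‖ = 1 ∧ c = ∑ j, ∑ a, ∑ b, X j a b * u j * v a * w b } := by
    refine ⟨‖u‖⁻¹ • u, ‖v‖⁻¹ • v, ‖w‖⁻¹ • w, ?_, ?_, ?_, (S_scale X u v w _ _ _).symm⟩
    · rw [norm_smul]; simp [hu']
    · rw [norm_smul]; simp [hv']
    · rw [norm_smul]; simp [hw']
  have := le_csSup (tOpNorm_bdd X) hmem
  rw [tOpNorm] at *
  have hpos : 0 < ‖u‖ * ‖v‖ * ‖w‖ := by positivity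
  calc ∑ j, ∑ a, ∑ b, X j a b * u j * v a * w b
      = (‖u‖ * ‖v‖ * ‖w‖) * ((‖u‖⁻¹ * ‖v‖⁻¹ * ‖w‖⁻¹) * ∑ j, ∑ a, ∑ b, X j a b * u j * v a * w b) := by
        field_simp
    _ ≤ (‖u‖ * ‖v‖ * ‖w‖) * sSup _ := by exact mul_le_mul_of_nonneg_left this hpos.le
    _ = _ := by ring

lemma inner_comb {J n : ℕ} (X : Fin J → Matrix (Fin n) (Fin n) ℝ)
    (u : EuclideanSpace ℝ (Fin J)) (v w : EuclideanSpace ℝ (Fin n)) :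
    ⟪v, (LinearMap.toContinuousLinearMap (Matrix.toEuclideanLin (∑ j, u j • X j))) w⟫
      = ∑ j, ∑ a, ∑ b, X j a b * u j * v a * w b := by
  rw [PiLp.inner_apply]
  simp only [RCLike.inner_apply, starRingEnd_apply, star_trivial]
  have happ : ∀ a : Fin n,
      (LinearMap.toContinuousLinearMap (Matrix.toEuclideanLin (∑ j, u j • X j))) w a
        = ∑ b, (∑ j, u j • X j) a b * w b := by
    intro a
    rfl
  have hswap : ∀ a : Fin n,
      (LinearMap.toContinuousLinearMap (Matrix.toEuclideanLin (∑ j, u j • X j))) w a * v a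
        = v a * (LinearMap.toContinuousLinearMap (Matrix.toEuclideanLin (∑ j, u j • X j))) w a :=
    fun a => mul_comm _ _
  simp only [hswap]
  calc ∑ a, v a * (LinearMap.toContinuousLinearMap (Matrix.toEuclideanLin (∑ j, u j • X j))) w a
      = ∑ a, v a * ∑ b, (∑ j, u j • X j) a b * w b := by
        refine Finset.sum_congr rfl fun a _ => ?_; rw [happ a]
    _ = ∑ j, ∑ a, ∑ b, X j a b * u j * v a * w b := by
        rw [Finset.sum_comm]
        refine Finset.sum_congr rfl fun a _ => ?_
        rw [Finset.mul_sum, Finset.sum_comm]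
        refine Finset.sum_congr rfl fun b _ => ?_
        simp only [Matrix.sum_apply, Matrix.smul_apply, smul_eq_mul, Finset.sum_mul,
          Finset.mul_sum]
        refine Finset.sum_congr rfl fun j _ => ?_
        ring

lemma specNorm_combo_le {J n : ℕ} (X : Fin J → Matrix (Fin n) (Fin n) ℝ)
    (u : EuclideanSpace ℝ (Fin J)) :
    specNorm (∑ j, u j • X j) ≤ ‖u‖ * tOpNorm X := by
  rw [specNorm]
  apply ContinuousLinearMap.opNorm_le_bound _
    (mul_nonneg (norm_nonneg u) (tOpNorm_nonneg X))
  intro w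
  set f := LinearMap.toContinuousLinearMap (Matrix.toEuclideanLin (∑ j, u j • X j)) with hf
  rcases eq_or_ne (f w) 0 with h0 | h0
  · rw [h0, norm_zero]; have := tOpNorm_nonneg X; positivity
  · have hpos : 0 < ‖f w‖ := norm_pos_iff.mpr h0
    have h1 : ‖f w‖ ^ 2 = ⟪f w, f w⟫ := (real_inner_self_eq_norm_sq _).symm
    have h2 := inner_comb X u (f w) w
    have h3 := S_le X u (f w) w
    rw [← h2] at h3
    nlinarith [h1, h3, norm_nonneg w, norm_nonneg u, tOpNorm_nonneg X]


lemma specNorm_add_le {a b : ℕ} (X Y : Matrix (Fin a) (Fin b) ℝ) :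
    specNorm (X + Y) ≤ specNorm X + specNorm Y := by
  rw [specNorm, specNorm, specNorm, map_add, map_add]
  exact norm_add_le _ _

lemma specNorm_neg {a b : ℕ} (X : Matrix (Fin a) (Fin b) ℝ) :
    specNorm (-X) = specNorm X := by
  rw [specNorm, specNorm, map_neg, map_neg, norm_neg]

/-- Spectral-norm error of the best rank-`K_m` approximation of the
weighted layer average. -/
theorem stmt6 {L M n : ℕ} (K : Fin M → ℕ)
    (Wstar What : Matrix (Fin L) (Fin M) ℝ)
    (hWstar : Wstarᵀ * Wstar = 1) (hWhat : Whatᵀ * What = 1)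
    (Q : Fin M → Matrix (Fin n) (Fin n) ℝ) (hrank : ∀ m, (Q m).rank ≤ K m)
    (A : Fin L → Matrix (Fin n) (Fin n) ℝ)
    (m : Fin M)
    (Qhat : Matrix (Fin n) (Fin n) ℝ) (hQhatRank : Qhat.rank ≤ K m)
    (hopt : ∀ Z : Matrix (Fin n) (Fin n) ℝ, Z.rank ≤ K m →
      specNorm ((∑ l, What l m • A l) - Qhat) ≤ specNorm ((∑ l, What l m • A l) - Z)) :
    specNorm (Qhat - Q m) ≤
      2 * tOpNorm Q * frobNorm (What - Wstar) +
        2 * tOpNorm (fun l => A l - mode1 Q Wstar l) := by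
  set D : Matrix (Fin n) (Fin n) ℝ := ∑ l, What l m • A l with hD
  set Δ : Fin L → Matrix (Fin n) (Fin n) ℝ := fun l => A l - mode1 Q Wstar l with hΔ
  set r : Fin M → ℝ := fun m' => (∑ l, What l m * Wstar l m') - (if m' = m then 1 else 0)
    with hr
  -- column entries of ŴᵀŴ = 1
  have hcol : ∀ m' : Fin M, ∑ l, What l m * What l m' = if m = m' then 1 else 0 := by
    intro m'
    have := congrFun (congrFun hWhat m) m'
    rwa [Matrix.mul_apply, Matrix.one_apply] at this
    -- entries: Whatᵀ m l = What l m
  have hcolm : ∑ l, What l m * What l m = 1 := by simpa using hcol m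
  -- ‖Ŵ column m‖ = 1
  have huW : ‖(EuclideanSpace.equiv (Fin L) ℝ).symm (fun l => What l m)‖ = 1 := by
    rw [EuclideanSpace.norm_eq]
    have hap : ∀ l, ((EuclideanSpace.equiv (Fin L) ℝ).symm (fun l => What l m)) l
        = What l m := fun l => rfl
    have : ∑ l, ‖((EuclideanSpace.equiv (Fin L) ℝ).symm (fun l => What l m)) l‖ ^ 2 = 1 := by
      rw [← hcolm]
      refine Finset.sum_congr rfl fun l _ => ?_
      rw [hap l, Real.norm_eq_abs, sq_abs]; ring
    rw [this, Real.sqrt_one]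
  -- decomposition
  have hdecomp : D - Q m = (∑ l, What l m • Δ l) + ∑ m', r m' • Q m' := by
    ext i j
    simp only [hD, hΔ, hr, mode1, Matrix.sub_apply, Matrix.add_apply, Matrix.sum_apply,
      Matrix.smul_apply, smul_eq_mul, mul_sub, Finset.mul_sum, sub_mul, ite_mul, one_mul,
      zero_mul, Finset.sum_sub_distrib]
    have hT : ∑ l, ∑ m', What l m * (Wstar l m' * Q m' i j)
        = ∑ m', (∑ l, What l m * Wstar l m') * Q m' i j := by
      rw [Finset.sum_comm]
      refine Finset.sum_congr rfl fun m' _ => ?_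
      rw [Finset.sum_mul]
      exact Finset.sum_congr rfl fun l _ => by ring
    have hδ : ∑ m', (if m' = m then Q m' i j else 0) = Q m i j := by
      simp [Finset.sum_ite_eq']
    rw [hT, hδ]
    ring
  -- norms of the two pieces
  have h4 : specNorm (∑ l, What l m • Δ l) ≤ tOpNorm Δ := by
    have := specNorm_combo_le Δ ((EuclideanSpace.equiv (Fin L) ℝ).symm (fun l => What l m))
    rwa [huW, one_mul] at this
  have hrnorm : ‖(EuclideanSpace.equiv (Fin M) ℝ).symm r‖ ≤ frobNorm (What - Wstar) := by
    rw [EuclideanSpace.norm_eq, frobNorm]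
    apply Real.sqrt_le_sqrt
    have hap : ∀ m', ((EuclideanSpace.equiv (Fin M) ℝ).symm r) m' = r m' := fun _ => rfl
    have hsq : ∀ m' : Fin M, ‖((EuclideanSpace.equiv (Fin M) ℝ).symm r) m'‖ ^ 2
        ≤ ∑ l, ((What - Wstar) l m') ^ 2 := by
      intro m'
      rw [hap m', Real.norm_eq_abs, sq_abs]
      have hre : r m' = ∑ l, What l m * (Wstar l m' - What l m') := by
        rw [hr]
        simp only [mul_sub, Finset.sum_sub_distrib]
        have h1 : (if m' = m then (1:ℝ) else 0) = ∑ l, What l m * What l m' := by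
          rw [hcol m']
          by_cases h : m = m' <;> simp [h, eq_comm]
        rw [← h1]
      have hcs := Finset.sum_mul_sq_le_sq_mul_sq Finset.univ (fun l => What l m)
        (fun l => Wstar l m' - What l m')
      have hone : ∑ l, (What l m) ^ 2 = 1 := by
        rw [← hcolm]
        exact Finset.sum_congr rfl fun l _ => by ring
      calc (r m') ^ 2 = (∑ l, What l m * (Wstar l m' - What l m')) ^ 2 := by rw [hre]
        _ ≤ (∑ l, (What l m) ^ 2) * ∑ l, (Wstar l m' - What l m') ^ 2 := hcs
        _ = ∑ l, (Wstar l m' - What l m') ^ 2 := by rw [hone, one_mul]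
        _ = ∑ l, ((What - Wstar) l m') ^ 2 := by
            refine Finset.sum_congr rfl fun l _ => ?_
            rw [Matrix.sub_apply]; ring
    calc ∑ m', ‖((EuclideanSpace.equiv (Fin M) ℝ).symm r) m'‖ ^ 2
        ≤ ∑ m', ∑ l, ((What - Wstar) l m') ^ 2 :=
          Finset.sum_le_sum fun m' _ => hsq m'
      _ = ∑ l, ∑ m', ((What - Wstar) l m') ^ 2 := Finset.sum_comm
      _ = ∑ i, ∑ j, ((What - Wstar) i j) ^ 2 := rfl
  have h5 : specNorm (∑ m', r m' • Q m') ≤ frobNorm (What - Wstar) * tOpNorm Q := by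
    have h := specNorm_combo_le Q ((EuclideanSpace.equiv (Fin M) ℝ).symm r)
    exact h.trans (mul_le_mul_of_nonneg_right hrnorm (tOpNorm_nonneg Q))
  have h3 : specNorm (D - Q m) ≤ tOpNorm Δ + frobNorm (What - Wstar) * tOpNorm Q := by
    rw [hdecomp]
    exact (specNorm_add_le _ _).trans (add_le_add h4 h5)
  have h1 : specNorm (D - Qhat) ≤ specNorm (D - Q m) := hopt (Q m) (hrank m)
  have h2 : specNorm (Qhat - Q m) ≤ specNorm (Qhat - D) + specNorm (D - Q m) := by
    have : Qhat - Q m = (Qhat - D) + (D - Q m) := (sub_add_sub_cancel _ _ _).symm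
    rw [this]; exact specNorm_add_le _ _
  have hflip : specNorm (Qhat - D) = specNorm (D - Qhat) := by
    rw [show Qhat - D = -(D - Qhat) from (neg_sub D Qhat).symm, specNorm_neg]
  rw [hflip] at h2
  have final : specNorm (Qhat - Q m) ≤ 2 * (tOpNorm Δ + frobNorm (What - Wstar) * tOpNorm Q) := by
    linarith
  calc specNorm (Qhat - Q m) ≤ 2 * (tOpNorm Δ + frobNorm (What - Wstar) * tOpNorm Q) := final
    _ = 2 * tOpNorm Q * frobNorm (What - Wstar) + 2 * tOpNorm Δ := by ring
end

section
/- Let n ≥ 1 and let Q₁, Q₂ be nonzero symmetric n×n real matrices. For i = 1,2 let U_i have orthonormal columns spanning the column space of Q_i and set Π_i = I − U_iU_iᵀ. In the space ℝ^{2×n×n} of pairs of n×n matrices with the Frobenius inner product, let L₁ = {(X₁,X₂) : Π_1 X₁ Π_1 = 0 and Π_2 X₂ Π_2 = 0} and L₂ = span{(Q₂, −Q₁)} (which equals {Q ×₁ X : X ∈ ℝ^{2×2} skew-symmetric} for Q = (Q₁,Q₂)), and let κ_H = sup_{X≠0} ‖P_{L₂}P_{L₁}X‖_F/‖X‖_F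 with P_{L₁}, P_{L₂} the orthogonal projections. Then κ_H = √( ( ‖Q₁ − Π₂ Q₁ Π₂‖_F² + ‖Q₂ − Π₁ Q₂ Π₁‖_F² ) / ( ‖Q₁‖_F² + ‖Q₂‖_F² ) ). -/
open Matrix BigOperators

/-- Flattening a tensor into a Euclidean vector, as a linear map. -/
noncomputable def embT (M n : ℕ) :
    (Fin M → Matrix (Fin n) (Fin n) ℝ) →ₗ[ℝ] EuclideanSpace ℝ (Fin M × Fin n × Fin n) :=
  (WithLp.linearEquiv 2 ℝ ((Fin M × Fin n × Fin n) → ℝ)).symm.toLinearMap ∘ₗ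
    { toFun := fun X p => X p.1 p.2.1 p.2.2
      map_add' := fun _ _ => rfl
      map_smul' := fun _ _ => rfl }

/-- The linear map sending a flattened tensor `X` to the tensor with slices `Π m * X(m) * Π m`. -/
noncomputable def sandwichMap {M n : ℕ} (Pi : Fin M → Matrix (Fin n) (Fin n) ℝ) :
    EuclideanSpace ℝ (Fin M × Fin n × Fin n) →ₗ[ℝ] (Fin M → Matrix (Fin n) (Fin n) ℝ) where
  toFun v m := Pi m * (Matrix.of fun a b => v (m, a, b)) * Pi m
  map_add' x y := by
    funext m
    show Pi m * (Matrix.of fun a b => x (m, a, b) + y (m, a, b)) * Pi m = _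
    rw [show (Matrix.of fun a b => x (m, a, b) + y (m, a, b))
        = (Matrix.of fun a b => x (m, a, b)) + (Matrix.of fun a b => y (m, a, b)) from rfl,
      Matrix.mul_add, Matrix.add_mul]
    rfl
  map_smul' c x := by
    funext m
    show Pi m * (Matrix.of fun a b => c * x (m, a, b)) * Pi m = _
    rw [show (Matrix.of fun a b => c * x (m, a, b))
        = c • (Matrix.of fun a b => x (m, a, b)) from rfl,
      Matrix.mul_smul, Matrix.smul_mul]
    rfl

/-- The subspace `L₁` (flattened): tensors with `Π m * X(m) * Π m = 0` for all `m`. -/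
noncomputable def L1sub {M n : ℕ} (Pi : Fin M → Matrix (Fin n) (Fin n) ℝ) :
    Submodule ℝ (EuclideanSpace ℝ (Fin M × Fin n × Fin n)) :=
  LinearMap.ker (sandwichMap Pi)

/-- `κ_H`: the operator norm of `P_{L₂} P_{L₁}` (as a supremum of Rayleigh quotients). -/
noncomputable def kappaH {M n : ℕ}
    (L1 L2 : Submodule ℝ (EuclideanSpace ℝ (Fin M × Fin n × Fin n))) : ℝ :=
  sSup {c | ∃ X : EuclideanSpace ℝ (Fin M × Fin n × Fin n), X ≠ 0 ∧
    c = ‖(Submodule.orthogonalProjectionOnto L2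
        ((Submodule.orthogonalProjectionOnto L1 X : EuclideanSpace ℝ (Fin M × Fin n × Fin n))) :
      EuclideanSpace ℝ (Fin M × Fin n × Fin n))‖ / ‖X‖}


section stmt7aux

variable {M n : ℕ}

lemma sum_mul_eq_trace' {n : ℕ} (A B : Matrix (Fin n) (Fin n) ℝ) :
    ∑ a, ∑ b, A a b * B a b = (A * Bᵀ).trace := by
  rw [Matrix.trace]
  simp only [Matrix.diag_apply, Matrix.mul_apply, Matrix.transpose_apply]

lemma sandwich_adj' {n : ℕ} (P X Y : Matrix (Fin n) (Fin n) ℝ) (hP : Pᵀ = P) :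
    ((P * X * P) * Yᵀ).trace = (X * (P * Y * P)ᵀ).trace := by
  rw [Matrix.transpose_mul, Matrix.transpose_mul, hP]
  rw [show P * X * P * Yᵀ = P * (X * (P * Yᵀ)) by noncomm_ring,
    Matrix.trace_mul_comm]
  noncomm_ring

/-- `T = embT ∘ sandwichMap` as an endomorphism of the Euclidean space. -/
noncomputable def Tmap (Pi : Fin M → Matrix (Fin n) (Fin n) ℝ) :
    EuclideanSpace ℝ (Fin M × Fin n × Fin n) →ₗ[ℝ]
      EuclideanSpace ℝ (Fin M × Fin n × Fin n) :=
  (embT M n).comp (sandwichMap Pi)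

lemma embT_apply (X : Fin M → Matrix (Fin n) (Fin n) ℝ) (p : Fin M × Fin n × Fin n) :
    embT M n X p = X p.1 p.2.1 p.2.2 := rfl

lemma Tmap_apply (Pi : Fin M → Matrix (Fin n) (Fin n) ℝ)
    (x : EuclideanSpace ℝ (Fin M × Fin n × Fin n)) (p : Fin M × Fin n × Fin n) :
    Tmap Pi x p = (Pi p.1 * (Matrix.of fun a b => x (p.1, a, b)) * Pi p.1) p.2.1 p.2.2 := rfl

lemma L1_eq_ker (Pi : Fin M → Matrix (Fin n) (Fin n) ℝ) :
    L1sub Pi = LinearMap.ker (Tmap Pi) := by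
  ext x
  simp only [L1sub, LinearMap.mem_ker, Tmap, LinearMap.comp_apply]
  constructor
  · intro h; rw [h]; rfl
  · intro h
    funext m
    ext a b
    have := congrArg (fun v => v (m, a, b)) h
    simpa [embT_apply] using this

lemma inner_eqT (x y : EuclideanSpace ℝ (Fin M × Fin n × Fin n)) :
    (inner ℝ x y : ℝ) = ∑ p : Fin M × Fin n × Fin n, x p * y p := by
  simp [PiLp.inner_apply, RCLike.inner_apply, mul_comm]

lemma Tmap_idem (Pi : Fin M → Matrix (Fin n) (Fin n) ℝ) (hPi : ∀ m, Pi m * Pi m = Pi m)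
    (x : EuclideanSpace ℝ (Fin M × Fin n × Fin n)) : Tmap Pi (Tmap Pi x) = Tmap Pi x := by
  ext p
  rw [Tmap_apply, Tmap_apply]
  have h1 : (Matrix.of fun a b => Tmap Pi x (p.1, a, b))
      = Pi p.1 * (Matrix.of fun a b => x (p.1, a, b)) * Pi p.1 := by
    ext a b; rfl
  rw [h1]
  rw [show Pi p.1 * (Pi p.1 * (Matrix.of fun a b => x (p.1, a, b)) * Pi p.1) * Pi p.1
      = (Pi p.1 * Pi p.1) * (Matrix.of fun a b => x (p.1, a, b)) * (Pi p.1 * Pi p.1) by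
    noncomm_ring]
  rw [hPi]

lemma Tmap_selfAdj (Pi : Fin M → Matrix (Fin n) (Fin n) ℝ) (hPiT : ∀ m, (Pi m)ᵀ = Pi m)
    (x y : EuclideanSpace ℝ (Fin M × Fin n × Fin n)) :
    (inner ℝ (Tmap Pi x) y : ℝ) = inner ℝ x (Tmap Pi y) := by
  rw [inner_eqT, inner_eqT, Fintype.sum_prod_type, Fintype.sum_prod_type]
  refine Finset.sum_congr rfl fun m _ => ?_
  simp only [Fintype.sum_prod_type]
  have hx : ∑ a, ∑ b, Tmap Pi x (m, a, b) * y (m, a, b)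
      = ∑ a, ∑ b, (Pi m * (Matrix.of fun a b => x (m, a, b)) * Pi m) a b
          * (Matrix.of fun a b => y (m, a, b)) a b :=
    Finset.sum_congr rfl fun a _ => Finset.sum_congr rfl fun b _ => rfl
  have hy : ∑ a, ∑ b, x (m, a, b) * Tmap Pi y (m, a, b)
      = ∑ a, ∑ b, (Matrix.of fun a b => x (m, a, b)) a b
          * (Pi m * (Matrix.of fun a b => y (m, a, b)) * Pi m) a b :=
    Finset.sum_congr rfl fun a _ => Finset.sum_congr rfl fun b _ => rfl
  rw [hx, hy, sum_mul_eq_trace', sum_mul_eq_trace']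
  exact sandwich_adj' _ _ _ (hPiT m)

lemma orthProj_ker_Tmap (Pi : Fin M → Matrix (Fin n) (Fin n) ℝ)
    (hPi : ∀ m, Pi m * Pi m = Pi m) (hPiT : ∀ m, (Pi m)ᵀ = Pi m)
    (x : EuclideanSpace ℝ (Fin M × Fin n × Fin n)) :
    (Submodule.orthogonalProjectionOnto (L1sub Pi) x : EuclideanSpace ℝ (Fin M × Fin n × Fin n))
      = x - Tmap Pi x := by
  rw [Submodule.coe_orthogonalProjectionOnto_apply]
  apply Submodule.eq_starProjection_of_mem_of_inner_eq_zero
  · rw [L1_eq_ker, LinearMap.mem_ker, map_sub, Tmap_idem Pi hPi, sub_self]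
  · intro w hw
    rw [L1_eq_ker, LinearMap.mem_ker] at hw
    rw [show x - (x - Tmap Pi x) = Tmap Pi x by abel]
    rw [Tmap_selfAdj Pi hPiT, hw, inner_zero_right]

lemma norm_embT (Z : Fin 2 → Matrix (Fin n) (Fin n) ℝ) :
    ‖embT 2 n Z‖ = Real.sqrt (∑ a, ∑ b, (Z 0 a b) ^ 2 + ∑ a, ∑ b, (Z 1 a b) ^ 2) := by
  rw [EuclideanSpace.norm_eq]
  congr 1
  rw [Fintype.sum_prod_type, Fin.sum_univ_two]
  congr 1 <;>
  · rw [Fintype.sum_prod_type]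
    exact Finset.sum_congr rfl fun a _ => Finset.sum_congr rfl fun b _ => by
      rw [Real.norm_eq_abs, sq_abs]; rfl

end stmt7aux

/-- Explicit formula for `κ_H` when `M = 2`. -/
theorem stmt7 {n : ℕ} (hn : 1 ≤ n) (K : Fin 2 → ℕ)
    (Q : Fin 2 → Matrix (Fin n) (Fin n) ℝ)
    (hQsymm : ∀ i, (Q i)ᵀ = Q i) (hQne : ∀ i, Q i ≠ 0)
    (U : ∀ i : Fin 2, Matrix (Fin n) (Fin (K i)) ℝ)
    (hUo : ∀ i, (U i)ᵀ * U i = 1)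
    (hUspan : ∀ i, Submodule.span ℝ (Set.range fun k => (U i)ᵀ k) =
      Submodule.span ℝ (Set.range fun j => (Q i)ᵀ j)) :
    kappaH (L1sub (fun i => 1 - U i * (U i)ᵀ))
        (Submodule.span ℝ {embT 2 n ![Q 1, -(Q 0)]}) =
      Real.sqrt
        ((frobNorm (Q 0 - (1 - U 1 * (U 1)ᵀ) * Q 0 * (1 - U 1 * (U 1)ᵀ)) ^ 2 +
            frobNorm (Q 1 - (1 - U 0 * (U 0)ᵀ) * Q 1 * (1 - U 0 * (U 0)ᵀ)) ^ 2) /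
          (frobNorm (Q 0) ^ 2 + frobNorm (Q 1) ^ 2)) := by

  classical
  set Pi : Fin 2 → Matrix (Fin n) (Fin n) ℝ := fun i => 1 - U i * (U i)ᵀ with hPidef
  have hPiT : ∀ m, (Pi m)ᵀ = Pi m := by
    intro m
    simp [hPidef, Matrix.transpose_sub, Matrix.transpose_mul, Matrix.transpose_transpose]
  have hPiI : ∀ m, Pi m * Pi m = Pi m := by
    intro m
    have h := hUo m
    simp only [hPidef]
    simp only [Matrix.sub_mul, Matrix.mul_sub, Matrix.one_mul, Matrix.mul_one]
    rw [show U m * (U m)ᵀ * (U m * (U m)ᵀ) = U m * ((U m)ᵀ * U m) * (U m)ᵀ by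
        simp only [Matrix.mul_assoc],
      h, Matrix.mul_one]
    abel
  set Y : Fin 2 → Matrix (Fin n) (Fin n) ℝ := ![Q 1, -(Q 0)] with hYdef
  set v : EuclideanSpace ℝ (Fin 2 × Fin n × Fin n) := embT 2 n Y with hvdef
  have hY0 : Y 0 = Q 1 := rfl
  have hY1 : Y 1 = -(Q 0) := rfl
  have hv_ne : v ≠ 0 := by
    intro h
    apply hQne 0
    ext a b
    have := congrArg (fun v => v (1, a, b)) h
    have h2 : Y 1 a b = 0 := this
    rw [hY1] at h2
    simpa using h2
  have hv_pos : (0:ℝ) < ‖v‖ := norm_pos_iff.mpr hv_ne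
  set W : Fin 2 → Matrix (Fin n) (Fin n) ℝ := fun m => Y m - Pi m * Y m * Pi m with hWdef
  have hTv : Tmap Pi v = embT 2 n (fun m => Pi m * Y m * Pi m) := by
    ext p
    rfl
  set w : EuclideanSpace ℝ (Fin 2 × Fin n × Fin n) := v - Tmap Pi v with hwdef
  have hw_emb : w = embT 2 n W := by
    rw [hwdef, hTv, hvdef, ← map_sub]
    rfl
  -- the value of each element of the sup set
  have key : ∀ X : EuclideanSpace ℝ (Fin 2 × Fin n × Fin n),
      ‖(Submodule.orthogonalProjectionOnto (Submodule.span ℝ {v})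
          ((Submodule.orthogonalProjectionOnto (L1sub Pi) X : EuclideanSpace ℝ (Fin 2 × Fin n × Fin n))) :
        EuclideanSpace ℝ (Fin 2 × Fin n × Fin n))‖ = |(inner ℝ w X : ℝ)| / ‖v‖ := by
    intro X
    rw [orthProj_ker_Tmap Pi hPiI hPiT]
    rw [Submodule.coe_orthogonalProjectionOnto_apply, Submodule.starProjection_singleton ℝ (X - Tmap Pi X), norm_smul]
    have hinner : (inner ℝ v (X - Tmap Pi X) : ℝ) = inner ℝ w X := by
      rw [inner_sub_right, hwdef, inner_sub_left]
      congr 1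
      exact (Tmap_selfAdj Pi hPiT v X).symm
    rw [hinner]
    rw [Real.norm_eq_abs, abs_div]
    simp only [RCLike.ofReal_real_eq_id, id_eq]
    rw [abs_of_nonneg (by positivity : (0:ℝ) ≤ ‖v‖^2)]
    rw [div_mul_eq_mul_div, div_eq_div_iff (by positivity : (0:ℝ) < ‖v‖^2).ne' hv_pos.ne']
    ring
  -- sSup computation
  have hval : kappaH (L1sub Pi) (Submodule.span ℝ {v}) = ‖w‖ / ‖v‖ := by
    rw [kappaH]
    apply IsGreatest.csSup_eq
    constructor
    · by_cases hw0 : w = 0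
      · refine ⟨v, hv_ne, ?_⟩
        rw [key v, hw0]
        simp
      · refine ⟨w, hw0, ?_⟩
        have hwn : (0:ℝ) < ‖w‖ := norm_pos_iff.mpr hw0
        rw [key w, real_inner_self_eq_norm_sq, abs_of_nonneg (by positivity)]
        field_simp
    · rintro c ⟨X, hX, rfl⟩
      rw [key X]
      have hXn : (0:ℝ) < ‖X‖ := norm_pos_iff.mpr hX
      rw [div_div]
      calc |(inner ℝ w X : ℝ)| / (‖v‖ * ‖X‖) ≤ ‖w‖ * ‖X‖ / (‖v‖ * ‖X‖) := by
            gcongr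
            exact abs_real_inner_le_norm w X
        _ = ‖w‖ / ‖v‖ := by
            rw [div_eq_div_iff (by positivity : (0:ℝ) < ‖v‖ * ‖X‖).ne' hv_pos.ne']
            ring
  rw [hval]
  -- final arithmetic
  have hW0 : W 0 = Q 1 - Pi 0 * Q 1 * Pi 0 := by rw [hWdef]; simp [hY0]
  have hW1 : W 1 = -(Q 0 - Pi 1 * Q 0 * Pi 1) := by
    rw [hWdef]
    simp only [hY1, Matrix.neg_mul, Matrix.mul_neg]
    abel
  have hnw : ‖w‖ = Real.sqrt (∑ a, ∑ b, ((Q 1 - Pi 0 * Q 1 * Pi 0) a b) ^ 2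
      + ∑ a, ∑ b, ((Q 0 - Pi 1 * Q 0 * Pi 1) a b) ^ 2) := by
    rw [hw_emb, norm_embT]
    congr 1
    rw [hW0, hW1]
    congr 1
    exact Finset.sum_congr rfl fun a _ => Finset.sum_congr rfl fun b _ => by
      rw [show (-(Q 0 - Pi 1 * Q 0 * Pi 1)) a b = -((Q 0 - Pi 1 * Q 0 * Pi 1) a b) from rfl,
        neg_sq]
  have hnv : ‖v‖ = Real.sqrt (∑ a, ∑ b, ((Q 1) a b) ^ 2 + ∑ a, ∑ b, ((Q 0) a b) ^ 2) := by
    rw [hvdef, norm_embT]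
    congr 1
    rw [hY0, hY1]
    congr 1
    exact Finset.sum_congr rfl fun a _ => Finset.sum_congr rfl fun b _ => by
      rw [show (-(Q 0)) a b = -((Q 0) a b) from rfl, neg_sq]
  rw [hnw, hnv]
  have hfrob : ∀ {X : Matrix (Fin n) (Fin n) ℝ}, frobNorm X ^ 2 = ∑ a, ∑ b, (X a b) ^ 2 := by
    intro X
    rw [frobNorm, Real.sq_sqrt]
    positivity
  rw [hfrob, hfrob, hfrob, hfrob]
  rw [← Real.sqrt_div (by positivity)]
  congr 1
  rw [hPidef]
  ring
end

section
/- Let Θ ∈ {0,1}^{n×K} be a membership matrix: each row of Θ has exactly one entry equal to 1, and each column of Θ is nonzero; let g_k denote the number of ones in the k-th column. Let B ∈ ℝ^{K×K} be symmetric. Then the K-th largest singular value of Θ B Θᵀ satisfies σ_K(Θ B Θᵀ) ≥ σ_K(B) · min_{1≤k≤K} g_k. -/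
open Matrix BigOperators

/-- `singVal X k`: the `k`-th largest singular value of `X` (1-indexed),
i.e. the `k`-th largest square root of an eigenvalue of `Xᴴ X`. -/
noncomputable def singVal {a b : ℕ} (X : Matrix (Fin a) (Fin b) ℝ) (k : ℕ) : ℝ :=
  ((((Finset.univ : Finset (Fin b)).val.map
      (fun i => Real.sqrt ((by simpa using Matrix.isHermitian_conjTranspose_mul_self X : (Xᵀ * X).IsHermitian).eigenvalues i))).sort
      (· ≤ ·)).getD (b - k) 0)

/-- The positive semidefinite square root of a positive semidefinite matrix
(junk value `0` otherwise). -/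
noncomputable def matSqrt {d : ℕ} (A : Matrix (Fin d) (Fin d) ℝ) : Matrix (Fin d) (Fin d) ℝ :=
  open scoped Classical in
  if h : A.PosSemidef then
    h.1.eigenvectorUnitary.1 * diagonal (Real.sqrt ∘ h.1.eigenvalues) *
      (star h.1.eigenvectorUnitary : Matrix (Fin d) (Fin d) ℝ) else 0

/-- `Πₒ(X) = X (XᵀX)^{-1/2}`, the projection onto the nearest orthonormal-column matrix. -/
noncomputable def Pio {a b : ℕ} (X : Matrix (Fin a) (Fin b) ℝ) : Matrix (Fin a) (Fin b) ℝ :=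
  X * (matSqrt (Xᵀ * X))⁻¹

/-! ### Auxiliary lemmas -/

lemma star_coe_eq {m : ℕ} (U : Matrix (Fin m) (Fin m) ℝ) : star U = Uᵀ := by
  rw [star_eq_conjTranspose, conjTranspose_eq_transpose_of_trivial]

lemma quad_eq {m : ℕ} {A : Matrix (Fin m) (Fin m) ℝ} (hA : A.IsHermitian) (x : Fin m → ℝ) :
    x ⬝ᵥ (A *ᵥ x) = ∑ i, hA.eigenvalues i *
      ((star (hA.eigenvectorUnitary : Matrix (Fin m) (Fin m) ℝ) *ᵥ x) i)^2 := by
  set U := (hA.eigenvectorUnitary : Matrix (Fin m) (Fin m) ℝ)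
  set c := star U *ᵥ x with hc
  conv_lhs => rw [hA.spectral_theorem, Unitary.conjStarAlgAut_apply]
  rw [← mulVec_mulVec, ← mulVec_mulVec, dotProduct_mulVec]
  have hxU : x ᵥ* U = c := by rw [hc, star_coe_eq, mulVec_transpose]
  rw [hxU, ← hc]
  simp only [dotProduct, mulVec_diagonal, Function.comp_apply, RCLike.ofReal_real_eq_id, id_eq]
  exact Finset.sum_congr rfl fun i _ => by ring

lemma norm_eq {m : ℕ} {A : Matrix (Fin m) (Fin m) ℝ} (hA : A.IsHermitian) (x : Fin m → ℝ) :
    x ⬝ᵥ x = ∑ i, ((star (hA.eigenvectorUnitary : Matrix (Fin m) (Fin m) ℝ) *ᵥ x) i)^2 := by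
  set U := (hA.eigenvectorUnitary : Matrix (Fin m) (Fin m) ℝ)
  set c := star U *ᵥ x with hc
  have h1 : c ⬝ᵥ c = ∑ i, (c i)^2 := by simp [dotProduct, sq]
  have h2 : U * Uᵀ = 1 := by
    rw [← star_coe_eq]; exact (Matrix.mem_unitaryGroup_iff).mp hA.eigenvectorUnitary.2
  rw [← h1, hc, dotProduct_mulVec, star_coe_eq, vecMul_transpose, mulVec_mulVec, h2, one_mulVec]

lemma quad_lower {m : ℕ} {A : Matrix (Fin m) (Fin m) ℝ} (hA : A.IsHermitian) {t : ℝ}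
    (ht : ∀ i, t ≤ hA.eigenvalues i) (x : Fin m → ℝ) :
    t * (x ⬝ᵥ x) ≤ x ⬝ᵥ (A *ᵥ x) := by
  rw [quad_eq hA x, norm_eq hA x, Finset.mul_sum]
  exact Finset.sum_le_sum fun i _ => mul_le_mul_of_nonneg_right (ht i) (sq_nonneg _)

lemma dot_transpose_mul {a b : ℕ} (M : Matrix (Fin a) (Fin b) ℝ) (x : Fin b → ℝ) :
    x ⬝ᵥ ((Mᵀ * M) *ᵥ x) = (M *ᵥ x) ⬝ᵥ (M *ᵥ x) := by
  rw [← mulVec_mulVec, dotProduct_mulVec, vecMul_transpose]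

lemma count_eig_ge {n K : ℕ} {A : Matrix (Fin n) (Fin n) ℝ} (hA : A.IsHermitian)
    (Θ : Matrix (Fin n) (Fin K) ℝ) (hinj : ∀ y, Θ *ᵥ y = 0 → y = 0) (t : ℝ)
    (hq : ∀ y : Fin K → ℝ, t * ((Θ *ᵥ y) ⬝ᵥ (Θ *ᵥ y)) ≤ (Θ *ᵥ y) ⬝ᵥ (A *ᵥ (Θ *ᵥ y))) :
    K ≤ (Finset.univ.filter fun i => t ≤ hA.eigenvalues i).card := by
  by_contra hlt
  push_neg at hlt
  set T := (Finset.univ.filter fun i => t ≤ hA.eigenvalues i) with hT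
  set U := (hA.eigenvectorUnitary : Matrix (Fin n) (Fin n) ℝ)
  let f : (Fin K → ℝ) →ₗ[ℝ] ({i // i ∈ T} → ℝ) :=
    (LinearMap.funLeft ℝ ℝ (fun i : {i // i ∈ T} => (i : Fin n))).comp
      (Matrix.mulVecLin (star U * Θ))
  have hker : ∃ y : Fin K → ℝ, y ≠ 0 ∧ f y = 0 := by
    have h1 := LinearMap.finrank_range_add_finrank_ker f
    have h2 : Module.finrank ℝ (LinearMap.range f) ≤ T.card := by
      have := Submodule.finrank_le (LinearMap.range f)
      simpa [Module.finrank_fintype_fun_eq_card, Fintype.card_coe] using this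
    have h3 : Module.finrank ℝ (Fin K → ℝ) = K := by simp
    have hpos : 0 < Module.finrank ℝ (LinearMap.ker f) := by omega
    obtain ⟨⟨y, hy⟩, hy0⟩ := Module.finrank_pos_iff_exists_ne_zero.mp hpos
    exact ⟨y, by simpa using hy0, hy⟩
  obtain ⟨y, hy0, hfy⟩ := hker
  set x := Θ *ᵥ y with hx
  set c := star U *ᵥ x with hc
  have hcT : ∀ i ∈ T, c i = 0 := by
    intro i hi
    have := congrFun hfy ⟨i, hi⟩
    simpa [f, c, x, Matrix.mulVecLin_apply, Matrix.mulVec_mulVec, LinearMap.funLeft] using this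
  have hx0 : x ≠ 0 := fun h => hy0 (hinj y h)
  have hsum : x ⬝ᵥ x = ∑ i, (c i)^2 := norm_eq hA x
  have hxx : 0 < x ⬝ᵥ x := by
    have hne : x ⬝ᵥ x ≠ 0 := fun h0 => hx0 (dotProduct_self_eq_zero.mp h0)
    have hge : 0 ≤ x ⬝ᵥ x := by
      rw [hsum]; exact Finset.sum_nonneg fun i _ => sq_nonneg _
    exact lt_of_le_of_ne hge (Ne.symm hne)
  have hquad : x ⬝ᵥ (A *ᵥ x) = ∑ i, hA.eigenvalues i * (c i)^2 := quad_eq hA x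
  have hzeroT : ∀ i ∈ T, (c i)^2 = 0 := fun i hi => by rw [hcT i hi]; ring
  have hsum' : ∑ i, (c i)^2 = ∑ i ∈ Tᶜ, (c i)^2 := by
    rw [← Finset.sum_add_sum_compl T]
    rw [Finset.sum_eq_zero hzeroT, zero_add]
  have hquad' : ∑ i, hA.eigenvalues i * (c i)^2 = ∑ i ∈ Tᶜ, hA.eigenvalues i * (c i)^2 := by
    rw [← Finset.sum_add_sum_compl T,
      Finset.sum_eq_zero (fun i hi => by rw [hcT i hi]; ring), zero_add]
  have hex : ∃ i ∈ Tᶜ, c i ≠ 0 := by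
    by_contra hno
    push_neg at hno
    have : ∑ i ∈ Tᶜ, (c i)^2 = 0 := Finset.sum_eq_zero (fun i hi => by rw [hno i hi]; ring)
    rw [hsum, hsum', this] at hxx
    exact lt_irrefl 0 hxx
  obtain ⟨j, hjc, hj0⟩ := hex
  have hlt2 : ∑ i ∈ Tᶜ, hA.eigenvalues i * (c i)^2 < ∑ i ∈ Tᶜ, t * (c i)^2 := by
    apply Finset.sum_lt_sum
    · intro i hi
      have : hA.eigenvalues i < t := by
        simp only [T, Finset.mem_compl, Finset.mem_filter, Finset.mem_univ, true_and,
          not_le] at hi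
        exact hi
      nlinarith [sq_nonneg (c i)]
    · refine ⟨j, hjc, ?_⟩
      have h1 : hA.eigenvalues j < t := by
        simp only [T, Finset.mem_compl, Finset.mem_filter, Finset.mem_univ, true_and,
          not_le] at hjc
        exact hjc
      have h2 : 0 < (c j)^2 := lt_of_le_of_ne (sq_nonneg _) (Ne.symm (pow_ne_zero 2 hj0))
      nlinarith
  have := hq y
  rw [← hx, hquad, hquad', hsum] at this
  have heq : t * ∑ i, (c i)^2 = ∑ i ∈ Tᶜ, t * (c i)^2 := by
    rw [hsum', Finset.mul_sum]
  rw [heq] at this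
  exact absurd this (not_le.mpr hlt2)

/-- In a sorted list, the first element is ≤ every member. -/
lemma sort_getD_zero_le (s : Multiset ℝ) {x : ℝ} (hx : x ∈ s) :
    (s.sort (· ≤ ·)).getD 0 0 ≤ x := by
  set l := s.sort (· ≤ ·) with hl
  have hsort : l.Pairwise (· ≤ ·) := s.pairwise_sort _
  have hmem : x ∈ l := by rw [hl, Multiset.mem_sort]; exact hx
  obtain ⟨j, hj, hjx⟩ := List.mem_iff_getElem.mp hmem
  have h0 : 0 < l.length := lt_of_le_of_lt (Nat.zero_le _) hj
  rw [List.getD_eq_getElem _ _ h0]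
  rw [← hjx]
  have := hsort.rel_get_of_le (a := ⟨0, h0⟩) (b := ⟨j, hj⟩) (by simp)
  simpa using this

/-- getD of sort at a valid index is a member. -/
lemma sort_getD_mem (s : Multiset ℝ) (k : ℕ) (hk : k < Multiset.card s) :
    (s.sort (· ≤ ·)).getD k 0 ∈ s := by
  have hlen : (s.sort (· ≤ ·)).length = Multiset.card s := s.length_sort _
  rw [List.getD_eq_getElem _ _ (by omega)]
  rw [← Multiset.mem_sort (· ≤ ·)]
  exact List.getElem_mem _

/-- If at least K elements (with multiplicity) of s are ≥ c, then the sorted list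
at position (card - K) is ≥ c. -/
lemma sort_getD_ge (s : Multiset ℝ) (c : ℝ) (Kk : ℕ) (hK1 : 1 ≤ Kk)
    (hKn : Kk ≤ Multiset.card s)
    (hcount : Kk ≤ Multiset.countP (fun x => c ≤ x) s) :
    c ≤ (s.sort (· ≤ ·)).getD (Multiset.card s - Kk) 0 := by
  set l := s.sort (· ≤ ·) with hl
  have hsort : l.Pairwise (· ≤ ·) := s.pairwise_sort _
  have hlen : l.length = Multiset.card s := s.length_sort _
  set m := Multiset.card s with hm
  set idx := m - Kk with hidx
  have hidxlt : idx < m := by omega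
  have hseq : ((l : Multiset ℝ)) = s := by rw [hl]; exact s.sort_eq _
  have hcl : l.countP (fun x => decide (c ≤ x)) = Multiset.countP (fun x => c ≤ x) s := by
    conv_rhs => rw [← hseq]
    rfl
  have hsplit : l = l.take (idx + 1) ++ l.drop (idx + 1) := (List.take_append_drop _ _).symm
  have hdroplen : (l.drop (idx + 1)).length = Kk - 1 := by rw [List.length_drop, hlen]; omega
  have hcount_take : 1 ≤ (l.take (idx + 1)).countP (fun x => decide (c ≤ x)) := by
    have h1 : l.countP (fun x => decide (c ≤ x)) =
        (l.take (idx + 1)).countP (fun x => decide (c ≤ x)) +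
        (l.drop (idx + 1)).countP (fun x => decide (c ≤ x)) := by
      conv_lhs => rw [hsplit]
      rw [List.countP_append]
    have h2 : (l.drop (idx + 1)).countP (fun x => decide (c ≤ x)) ≤ Kk - 1 := by
      rw [← hdroplen]; exact List.countP_le_length
    omega
  have hex : ∃ x ∈ l.take (idx + 1), c ≤ x := by
    by_contra hno
    push_neg at hno
    have : (l.take (idx + 1)).countP (fun x => decide (c ≤ x)) = 0 := by
      rw [List.countP_eq_zero]
      intro a ha
      simpa using not_le.mpr (hno a ha)
    omega
  obtain ⟨x, hxt, hcx⟩ := hex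
  obtain ⟨i, hi, hix⟩ := List.mem_iff_getElem.mp hxt
  have hi' : i < l.length := by
    have := List.length_take_le (idx + 1) l
    omega
  have hii : i ≤ idx := by
    have : (l.take (idx+1)).length ≤ idx + 1 := List.length_take_le _ _
    omega
  rw [List.getD_eq_getElem _ _ (by omega)]
  calc c ≤ x := hcx
    _ = l[i]'hi' := by rw [← hix]; simp
    _ ≤ l[idx]'(by omega) := by
        have := hsort.rel_get_of_le (a := ⟨i, hi'⟩) (b := ⟨idx, by omega⟩) (by simpa using hii)
        simpa using this

/-- Smallest singular value of `Θ B Θᵀ` for a membership matrix `Θ`. -/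
theorem stmt8 {n K : ℕ} (Θ : Matrix (Fin n) (Fin K) ℝ)
    (h01 : ∀ i k, Θ i k = 0 ∨ Θ i k = 1)
    (hrow : ∀ i, ∃! k, Θ i k = 1)
    (hcol : ∀ k, ∃ i, Θ i k = 1)
    (B : Matrix (Fin K) (Fin K) ℝ) (hB : Bᵀ = B) :
    singVal B K * (⨅ k : Fin K,
        ((Finset.univ.filter fun i => Θ i k = 1).card : ℝ)) ≤
      singVal (Θ * B * Θᵀ) K := by
  rcases Nat.eq_zero_or_pos K with hK0 | hK1
  · subst hK0
    have hL : singVal B 0 = 0 := by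
      simp [singVal]
    rw [hL, zero_mul]
    have hR : singVal (Θ * B * Θᵀ) 0 = 0 := by
      unfold singVal
      rw [List.getD_eq_default]
      rw [Multiset.length_sort]
      simp
    rw [hR]
  -- main case
  set g : Fin K → ℝ := fun k => ((Finset.univ.filter fun i => Θ i k = 1).card : ℝ) with hg
  have hg1 : ∀ k, 1 ≤ g k := by
    intro k
    have : 0 < (Finset.univ.filter fun i => Θ i k = 1).card := by
      rw [Finset.card_pos]
      obtain ⟨i, hi⟩ := hcol k
      exact ⟨i, by simp [hi]⟩
    show (1:ℝ) ≤ ((Finset.univ.filter fun i => Θ i k = 1).card : ℝ)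
    exact_mod_cast this
  -- Θᵀ Θ = diagonal g
  have hG : Θᵀ * Θ = Matrix.diagonal g := by
    ext k l
    rw [Matrix.mul_apply, Matrix.diagonal]
    by_cases hkl : k = l
    · subst hkl
      simp only [Matrix.transpose_apply, Matrix.of_apply, if_pos rfl]
      have hterm : ∀ i : Fin n, Θ i k * Θ i k = if Θ i k = 1 then (1:ℝ) else 0 := by
        intro i
        rcases h01 i k with h | h <;> simp [h]
      rw [Finset.sum_congr rfl fun i _ => hterm i, Finset.sum_boole]
      simp [hg]
    · simp only [Matrix.transpose_apply, Matrix.of_apply, if_neg hkl]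
      apply Finset.sum_eq_zero
      intro i _
      rcases h01 i k with h | h
      · rw [h, zero_mul]
      · obtain ⟨k0, hk0, huniq⟩ := hrow i
        have hkk0 : k = k0 := huniq k h
        rcases h01 i l with h' | h'
        · rw [h', mul_zero]
        · have : l = k0 := huniq l h'
          exact absurd (hkk0.trans this.symm) hkl
  -- norm identity
  have hnormΘ : ∀ z : Fin K → ℝ, (Θ *ᵥ z) ⬝ᵥ (Θ *ᵥ z) = ∑ k, g k * (z k)^2 := by
    intro z
    rw [← dot_transpose_mul, hG]
    simp only [Matrix.mulVec_diagonal, dotProduct]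
    exact Finset.sum_congr rfl fun k _ => by ring
  -- injectivity
  have hinj : ∀ y : Fin K → ℝ, Θ *ᵥ y = 0 → y = 0 := by
    intro y hy
    have h0 : ∑ k, g k * (y k)^2 = 0 := by
      rw [← hnormΘ, hy]; simp
    funext k
    have hterm : ∀ k ∈ Finset.univ, 0 ≤ g k * (y k)^2 := fun k _ =>
      mul_nonneg (le_trans zero_le_one (hg1 k)) (sq_nonneg _)
    have := (Finset.sum_eq_zero_iff_of_nonneg hterm).mp h0 k (Finset.mem_univ k)
    have hgk : g k ≠ 0 := fun h => by
      have := hg1 k; rw [h] at this; linarith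
    have : (y k)^2 = 0 := by
      rcases mul_eq_zero.mp this with h | h
      · exact absurd h hgk
      · exact h
    simpa using pow_eq_zero_iff (n := 2) (by norm_num) |>.mp this
  -- K ≤ n
  have hKn : K ≤ n := by
    have hmap : Function.Injective (fun k : Fin K => (hcol k).choose) := by
      intro k l hkl
      dsimp only at hkl
      have hk : Θ ((hcol k).choose) k = 1 := (hcol k).choose_spec
      have hl : Θ ((hcol l).choose) l = 1 := (hcol l).choose_spec
      rw [← hkl] at hl
      obtain ⟨k0, hk0, huniq⟩ := hrow ((hcol k).choose)
      exact (huniq k hk).trans (huniq l hl).symm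
    simpa using Fintype.card_le_of_injective _ hmap
  -- gmin
  set gmin : ℝ := ⨅ k : Fin K, g k with hgmin
  haveI : Nonempty (Fin K) := ⟨⟨0, hK1⟩⟩
  have hbdd : BddBelow (Set.range g) := Set.Finite.bddBelow (Set.finite_range g)
  have hgmin_le : ∀ k, gmin ≤ g k := fun k => ciInf_le hbdd k
  have hgmin1 : (1:ℝ) ≤ gmin := le_ciInf hg1
  have hgmin0 : (0:ℝ) ≤ gmin := le_trans zero_le_one hgmin1
  -- sB facts
  set eigB := (by simpa using Matrix.isHermitian_conjTranspose_mul_self B : (Bᵀ * B).IsHermitian).eigenvalues with heigB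
  set sB := singVal B K with hsB
  have hsB_eq : sB = (((Finset.univ : Finset (Fin K)).val.map
      (fun i => Real.sqrt (eigB i))).sort (· ≤ ·)).getD 0 0 := by
    rw [hsB]; unfold singVal; rw [Nat.sub_self]
  have hcardB : Multiset.card ((Finset.univ : Finset (Fin K)).val.map
      (fun i => Real.sqrt (eigB i))) = K := by simp
  have hsB_mem : sB ∈ (Finset.univ : Finset (Fin K)).val.map (fun i => Real.sqrt (eigB i)) := by
    rw [hsB_eq]
    exact sort_getD_mem _ 0 (by omega)
  have hsB0 : 0 ≤ sB := by
    obtain ⟨i, _, hi⟩ := Multiset.mem_map.mp hsB_mem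
    rw [← hi]; exact Real.sqrt_nonneg _
  have hsB_le_sqrt : ∀ i, sB ≤ Real.sqrt (eigB i) := by
    intro i
    rw [hsB_eq]
    exact sort_getD_zero_le _ (Multiset.mem_map_of_mem _ (Finset.mem_univ_val _))
  have heigB0 : ∀ i, 0 ≤ eigB i := by
    intro i
    have hps : (Bᵀ * B).PosSemidef := by
      rw [← Matrix.conjTranspose_eq_transpose_of_trivial]
      exact Matrix.posSemidef_conjTranspose_mul_self B
    exact hps.eigenvalues_nonneg i
  have hsB_sq : ∀ i, sB^2 ≤ eigB i := by
    intro i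
    have := pow_le_pow_left₀ hsB0 (hsB_le_sqrt i) 2
    rwa [Real.sq_sqrt (heigB0 i)] at this
  have hBz : ∀ z : Fin K → ℝ, sB^2 * (z ⬝ᵥ z) ≤ (B *ᵥ z) ⬝ᵥ (B *ᵥ z) := by
    intro z
    rw [← dot_transpose_mul]
    exact quad_lower _ hsB_sq z
  -- the big quadratic bound
  set M := Θ * B * Θᵀ with hM
  set hA := (by simpa using Matrix.isHermitian_conjTranspose_mul_self M : (Mᵀ * M).IsHermitian) with hhA
  set eigA := hA.eigenvalues with heigA
  set t : ℝ := (sB * gmin)^2 with ht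
  have hq : ∀ y : Fin K → ℝ,
      t * ((Θ *ᵥ y) ⬝ᵥ (Θ *ᵥ y)) ≤ (Θ *ᵥ y) ⬝ᵥ ((Mᵀ * M) *ᵥ (Θ *ᵥ y)) := by
    intro y
    rw [dot_transpose_mul]
    set w : Fin K → ℝ := fun k => g k * y k with hw
    have hMx : M *ᵥ (Θ *ᵥ y) = Θ *ᵥ (B *ᵥ w) := by
      have hmat : Θ * B * Θᵀ * Θ = Θ * (B * Matrix.diagonal g) := by
        rw [Matrix.mul_assoc (Θ * B), hG, Matrix.mul_assoc]
      have hdw : Matrix.diagonal g *ᵥ y = w := by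
        funext k; simp [Matrix.mulVec_diagonal, hw]
      rw [Matrix.mulVec_mulVec, hM, hmat, ← Matrix.mulVec_mulVec, ← Matrix.mulVec_mulVec, hdw]
    rw [hMx]
    -- h3 : gmin * ((B w) ⬝ (B w)) ≤ (Θ(Bw)) ⬝ (Θ(Bw))
    have h3 : gmin * ((B *ᵥ w) ⬝ᵥ (B *ᵥ w)) ≤ (Θ *ᵥ (B *ᵥ w)) ⬝ᵥ (Θ *ᵥ (B *ᵥ w)) := by
      rw [hnormΘ]
      have hdp : (B *ᵥ w) ⬝ᵥ (B *ᵥ w) = ∑ k, ((B *ᵥ w) k)^2 := by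
        simp [dotProduct, sq]
      rw [hdp, Finset.mul_sum]
      exact Finset.sum_le_sum fun k _ => mul_le_mul_of_nonneg_right (hgmin_le k) (sq_nonneg _)
    -- h2 : sB^2 * (w ⬝ w) ≤ (B w) ⬝ (B w)
    have h2 := hBz w
    -- h1 : gmin * ((Θ y) ⬝ (Θ y)) ≤ w ⬝ w
    have h1 : gmin * ((Θ *ᵥ y) ⬝ᵥ (Θ *ᵥ y)) ≤ w ⬝ᵥ w := by
      rw [hnormΘ, Finset.mul_sum]
      have hww : w ⬝ᵥ w = ∑ k, g k * g k * (y k)^2 := by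
        simp only [dotProduct, hw]
        exact Finset.sum_congr rfl fun k _ => by ring
      rw [hww]
      apply Finset.sum_le_sum
      intro k _
      have : gmin * (g k * (y k)^2) ≤ g k * (g k * (y k)^2) :=
        mul_le_mul_of_nonneg_right (hgmin_le k)
          (mul_nonneg (le_trans zero_le_one (hg1 k)) (sq_nonneg _))
      calc gmin * (g k * (y k)^2) ≤ g k * (g k * (y k)^2) := this
        _ = g k * g k * (y k)^2 := by ring
    have e1 : sB^2 * gmin * (gmin * ((Θ *ᵥ y) ⬝ᵥ (Θ *ᵥ y))) ≤ sB^2 * gmin * (w ⬝ᵥ w) :=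
      mul_le_mul_of_nonneg_left h1 (mul_nonneg (sq_nonneg _) hgmin0)
    have e2 : gmin * (sB^2 * (w ⬝ᵥ w)) ≤ gmin * ((B *ᵥ w) ⬝ᵥ (B *ᵥ w)) :=
      mul_le_mul_of_nonneg_left h2 hgmin0
    rw [ht]
    nlinarith [e1, e2, h3]
  -- apply counting
  have hcount := count_eig_ge hA Θ hinj t hq
  -- translate to the sqrt-multiset
  have hsubset : (Finset.univ.filter fun i => t ≤ eigA i) ⊆
      (Finset.univ.filter fun i => sB * gmin ≤ Real.sqrt (eigA i)) := by
    intro i hi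
    simp only [Finset.mem_filter, Finset.mem_univ, true_and] at hi ⊢
    calc sB * gmin = Real.sqrt ((sB * gmin)^2) := (Real.sqrt_sq (mul_nonneg hsB0 hgmin0)).symm
      _ ≤ Real.sqrt (eigA i) := Real.sqrt_le_sqrt (by rw [← ht]; exact hi)
  have hcount2 : K ≤ (Finset.univ.filter fun i => sB * gmin ≤ Real.sqrt (eigA i)).card :=
    le_trans hcount (Finset.card_le_card hsubset)
  set msA := (Finset.univ : Finset (Fin n)).val.map (fun i => Real.sqrt (eigA i)) with hmsA
  have hcardA : Multiset.card msA = n := by simp [hmsA]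
  have hcount3 : K ≤ Multiset.countP (fun x => sB * gmin ≤ x) msA := by
    rw [hmsA, Multiset.countP_map]
    calc K ≤ (Finset.univ.filter fun i => sB * gmin ≤ Real.sqrt (eigA i)).card := hcount2
      _ = Multiset.card ((Finset.univ : Finset (Fin n)).val.filter
            (fun i => sB * gmin ≤ Real.sqrt (eigA i))) := by
          rw [← Finset.filter_val]; rfl
  have hfinal := sort_getD_ge msA (sB * gmin) K hK1 (by omega) hcount3
  rw [hcardA] at hfinal
  -- conclude
  calc singVal B K * (⨅ k : Fin K, ((Finset.univ.filter fun i => Θ i k = 1).card : ℝ))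
      = sB * gmin := rfl
    _ ≤ (msA.sort (· ≤ ·)).getD (n - K) 0 := hfinal
    _ = singVal (Θ * B * Θᵀ) K := by rw [hmsA]; rfl
end

section
/- Let Q ∈ ℝ^{M×M} be symmetric positive definite, and let X, S, Y ∈ ℝ^{M×M} be such that S is symmetric, Y is skew-symmetric, and QY − X = S. Then max(‖QY‖_F, ‖S‖_F) ≤ 2‖X‖_F. -/
open Matrix BigOperators

attribute [local instance] Matrix.frobeniusNormedAddCommGroup Matrix.frobeniusNormedSpace

lemma frobNorm_eq_norm {a b : ℕ} (X : Matrix (Fin a) (Fin b) ℝ) : frobNorm X = ‖X‖ := by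
  rw [Matrix.frobenius_norm_def, frobNorm, Real.sqrt_eq_rpow]
  congr 1
  refine Finset.sum_congr rfl fun i _ => Finset.sum_congr rfl fun j _ => ?_
  rw [Real.rpow_two, Real.norm_eq_abs, sq_abs]

lemma norm_sq_eq {a b : ℕ} (X : Matrix (Fin a) (Fin b) ℝ) :
    ‖X‖ ^ 2 = ∑ i, ∑ j, (X i j) ^ 2 := by
  rw [← frobNorm_eq_norm, frobNorm, Real.sq_sqrt]
  positivity

lemma ip_eq_trace {a : ℕ} (A B : Matrix (Fin a) (Fin a) ℝ) :
    ∑ i, ∑ j, A i j * B i j = Matrix.trace (Aᵀ * B) := by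
  simp only [Matrix.trace, Matrix.diag, Matrix.mul_apply, Matrix.transpose_apply]
  exact Finset.sum_comm

lemma key_ineq {a : ℕ} (Q Y L : Matrix (Fin a) (Fin a) ℝ) (hQt : Qᵀ = Q) (hY : Yᵀ = -Y)
    (hLt : Lᵀ = L) (hLL : L * L = Q) :
    ‖Q * Y - Y * Q‖ ≤ ‖Q * Y + Y * Q‖ := by
  set W := L * Y * L with hWdef
  have hip : (0:ℝ) ≤ ∑ i, ∑ j, (Q * Y) i j * (Y * Q) i j := by
    rw [ip_eq_trace]
    have h1 : (Q * Y)ᵀ * (Y * Q) = -(Y * Q * (Y * Q)) := by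
      rw [Matrix.transpose_mul, hQt, hY]
      noncomm_ring
    have h2 : Matrix.trace (Y * Q * (Y * Q)) = Matrix.trace (W * W) := by
      rw [← hLL, hWdef]
      have : Y * (L * L) * (Y * (L * L)) = (Y * L) * (L * Y * L * L) := by noncomm_ring
      rw [this, Matrix.trace_mul_comm]
      congr 1
      noncomm_ring
    have h3 : Wᵀ = -W := by
      rw [hWdef, Matrix.transpose_mul, Matrix.transpose_mul, hLt, hY]
      noncomm_ring
    have h4 : -(Matrix.trace (W * W)) = ∑ i, ∑ j, W i j * W i j := by
      rw [ip_eq_trace, h3]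
      simp [Matrix.trace_neg]
    rw [h1, Matrix.trace_neg, h2, h4]
    apply Finset.sum_nonneg; intro i _; apply Finset.sum_nonneg; intro j _
    exact mul_self_nonneg _
  have hsq : ‖Q * Y - Y * Q‖ ^ 2 ≤ ‖Q * Y + Y * Q‖ ^ 2 := by
    rw [norm_sq_eq, norm_sq_eq]
    have e : ∀ i j, ((Q * Y + Y * Q) i j) ^ 2
        = ((Q * Y - Y * Q) i j) ^ 2 + 4 * ((Q * Y) i j * (Y * Q) i j) := by
      intro i j
      simp only [Matrix.add_apply, Matrix.sub_apply]
      ring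
    calc ∑ i, ∑ j, ((Q * Y - Y * Q) i j) ^ 2
        ≤ (∑ i, ∑ j, ((Q * Y - Y * Q) i j) ^ 2)
            + 4 * ∑ i, ∑ j, (Q * Y) i j * (Y * Q) i j := by linarith
      _ = ∑ i, ∑ j, ((Q * Y + Y * Q) i j) ^ 2 := by
          simp only [e, Finset.sum_add_distrib, Finset.mul_sum]
  have h1 := norm_nonneg (Q * Y + Y * Q)
  nlinarith [norm_nonneg (Q * Y - Y * Q)]

open scoped MatrixOrder in
lemma exists_sqrt_aux {M : ℕ} (Q : Matrix (Fin M) (Fin M) ℝ) (hQ : Q.PosDef) :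
    ∃ L : Matrix (Fin M) (Fin M) ℝ, Lᵀ = L ∧ L * L = Q := by
  refine ⟨CFC.sqrt Q, ?_, CFC.sqrt_mul_sqrt_self Q hQ.posSemidef.nonneg⟩
  have := (CFC.sqrt_nonneg Q).posSemidef.isHermitian.eq
  rwa [Matrix.conjTranspose_eq_transpose_of_trivial] at this

/-- If `Q` is symmetric positive definite, `S` symmetric, `Y` skew-symmetric
and `QY − X = S`, then `max(‖QY‖_F, ‖S‖_F) ≤ 2‖X‖_F`. -/
theorem stmt9 {M : ℕ} (Q X S Y : Matrix (Fin M) (Fin M) ℝ)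
    (hQ : Q.PosDef) (hS : Sᵀ = S) (hY : Yᵀ = -Y) (h : Q * Y - X = S) :
    max (frobNorm (Q * Y)) (frobNorm S) ≤ 2 * frobNorm X := by
  have hQt : Qᵀ = Q := by
    have := hQ.isHermitian.eq
    rwa [Matrix.conjTranspose_eq_transpose_of_trivial] at this
  have hQY : Q * Y = S + X := by rw [← h]; abel
  have hYQ : Y * Q = -S - Xᵀ := by
    have := congrArg Matrix.transpose h
    rw [Matrix.transpose_sub, Matrix.transpose_mul, hQt, hY, hS, Matrix.neg_mul] at this
    rw [← this]; abel
  have hsum : Q * Y + Y * Q = X - Xᵀ := by rw [hQY, hYQ]; abel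
  have hdiff : Q * Y - Y * Q = (S + S) + (X + Xᵀ) := by rw [hQY, hYQ]; abel
  obtain ⟨L, hLt, hLL⟩ := exists_sqrt_aux Q hQ
  have key := key_ineq Q Y L hQt hY hLt hLL
  rw [hsum] at key
  have hXt : ‖Xᵀ‖ = ‖X‖ := Matrix.frobenius_norm_transpose X
  have h1 : ‖X - Xᵀ‖ ≤ 2 * ‖X‖ := by
    calc ‖X - Xᵀ‖ ≤ ‖X‖ + ‖Xᵀ‖ := norm_sub_le _ _
      _ = 2 * ‖X‖ := by rw [hXt]; ring
  have hkey : ‖Q * Y - Y * Q‖ ≤ 2 * ‖X‖ := le_trans key h1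
  -- bound on S
  have hSS : S + S = (Q * Y - Y * Q) - (X + Xᵀ) := by rw [hdiff]; abel
  have h2S : 2 * ‖S‖ ≤ 4 * ‖X‖ := by
    have : ‖S + S‖ ≤ ‖Q * Y - Y * Q‖ + ‖X + Xᵀ‖ := by
      rw [hSS]; exact norm_sub_le _ _
    have h3 : ‖X + Xᵀ‖ ≤ 2 * ‖X‖ := by
      calc ‖X + Xᵀ‖ ≤ ‖X‖ + ‖Xᵀ‖ := norm_add_le _ _
        _ = 2 * ‖X‖ := by rw [hXt]; ring
    have h4 : ‖S + S‖ = 2 * ‖S‖ := by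
      have : S + S = (2:ℝ) • S := by rw [two_smul]
      rw [this, norm_smul]
      simp
    linarith
  -- bound on QY
  have hQY2 : (Q * Y) + (Q * Y) = (Q * Y - Y * Q) + (Q * Y + Y * Q) := by abel
  have h2QY : 2 * ‖Q * Y‖ ≤ 4 * ‖X‖ := by
    have h5 : ‖(Q * Y) + (Q * Y)‖ ≤ ‖Q * Y - Y * Q‖ + ‖Q * Y + Y * Q‖ := by
      rw [hQY2]; exact norm_add_le _ _
    have h6 : ‖(Q * Y) + (Q * Y)‖ = 2 * ‖Q * Y‖ := by
      have : (Q * Y) + (Q * Y) = (2:ℝ) • (Q * Y) := by rw [two_smul]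
      rw [this, norm_smul]
      simp
    rw [hsum] at h5
    linarith
  rw [frobNorm_eq_norm, frobNorm_eq_norm, frobNorm_eq_norm]
  apply max_le <;> linarith
end

section
/- Let Q_* ∈ ℝ^{M×n×n} have symmetric slices. For a fixed m, let U_m have orthonormal columns spanning the column space of Q_*(m), Π_{U_m⊥} = I − U_mU_mᵀ, and let Π_{T,K_m}(Q_*) ∈ ℝ^{M×n×n} be the tensor with slices Q_*(j) − Π_{U_m⊥} Q_*(j) Π_{U_m⊥}, j = 1,…,M. Then the spectral norm of the M×M matrix Q_* ×_{2,3} Π_{T,K_m}(Q_*) satisfies ‖Q_* ×_{2,3} Π_{T,K_m}(Q_*)‖ ≤ 2·‖Q_* ×_{2,3} Q_*‖. -/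
open Matrix BigOperators
open scoped Matrix.Norms.L2Operator

/-- `‖Q_* ×_{2,3} Π_{T,K_m}(Q_*)‖ ≤ 2‖Q_* ×_{2,3} Q_*‖`. -/
theorem stmt15 {M n Km : ℕ}
    (Q : Fin M → Matrix (Fin n) (Fin n) ℝ) (hQsymm : ∀ j, (Q j)ᵀ = Q j)
    (m : Fin M)
    (U : Matrix (Fin n) (Fin Km) ℝ) (hUo : Uᵀ * U = 1)
    (hUspan : Submodule.span ℝ (Set.range fun k => Uᵀ k) =
      Submodule.span ℝ (Set.range fun j => (Q m)ᵀ j)) :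
    specNorm (prod23 Q (piT (1 - U * Uᵀ) Q)) ≤ 2 * specNorm (prod23 Q Q) := by
  classical
  rw [show specNorm (prod23 Q (piT (1 - U * Uᵀ) Q)) = ‖prod23 Q (piT (1 - U * Uᵀ) Q)‖ from rfl,
      show specNorm (prod23 Q Q) = ‖prod23 Q Q‖ from rfl]
  set P : Matrix (Fin n) (Fin n) ℝ := 1 - U * Uᵀ with hP
  have hPt : Pᵀ = P := by
    simp [hP, Matrix.transpose_sub, Matrix.transpose_mul]
  have hPe : ∀ a b, P a b = P b a := fun a b => congrFun (congrFun hPt b) a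
  have hP2 : P * P = P := by
    have h1 : U * Uᵀ * (U * Uᵀ) = U * Uᵀ := by
      rw [Matrix.mul_assoc U, ← Matrix.mul_assoc Uᵀ, hUo, Matrix.one_mul]
    rw [hP, Matrix.sub_mul, Matrix.one_mul, Matrix.mul_sub, Matrix.mul_one, h1]
    abel
  have hP2e : ∀ a b, ∑ c, P a c * P c b = P a b := by
    intro a b
    have := congrArg (fun X : Matrix (Fin n) (Fin n) ℝ => X a b) hP2
    simpa [Matrix.mul_apply] using this
  set A : Matrix (Fin n × Fin n) (Fin M) ℝ := Matrix.of fun p i => Q i p.1 p.2 with hA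
  set K : Matrix (Fin n × Fin n) (Fin n × Fin n) ℝ :=
    Matrix.of fun p q => P p.1 q.1 * P p.2 q.2 with hK
  set D : Matrix (Fin n × Fin n) (Fin n × Fin n) ℝ := 1 - K with hD
  have hK2 : K * K = K := by
    ext p q
    simp only [Matrix.mul_apply, hK, Matrix.of_apply, Fintype.sum_prod_type]
    have h1 : ∀ c, ∑ d, P p.1 c * P p.2 d * (P c q.1 * P d q.2)
        = (P p.1 c * P c q.1) * ∑ d, P p.2 d * P d q.2 := by
      intro c; rw [Finset.mul_sum]
      exact Finset.sum_congr rfl fun d _ => by ring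
    rw [Finset.sum_congr rfl fun c _ => h1 c, ← Finset.sum_mul, hP2e p.1 q.1, hP2e p.2 q.2]
  have hKt : Kᵀ = K := by
    ext p q
    simp only [Matrix.transpose_apply, hK, Matrix.of_apply]
    rw [hPe q.1 p.1, hPe q.2 p.2]
  have hDt : Dᵀ = D := by rw [hD, Matrix.transpose_sub, Matrix.transpose_one, hKt]
  have hD2 : D * D = D := by
    rw [hD, Matrix.sub_mul, Matrix.one_mul, Matrix.mul_sub, Matrix.mul_one, hK2]
    abel
  have hCT : ∀ {a b : Type} [Fintype a] [Fintype b]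
      (X : Matrix a b ℝ), Xᴴ = Xᵀ := by
    intro a b _ _ X
    ext i j
    simp [Matrix.conjTranspose_apply]
  have hDn : ‖D‖ ≤ 1 := by
    have h1 : ‖Dᴴ * D‖ = ‖D‖ * ‖D‖ := Matrix.l2_opNorm_conjTranspose_mul_self D
    rw [hCT D, hDt, hD2] at h1
    nlinarith [norm_nonneg D]
  have hG : prod23 Q Q = Aᵀ * A := by
    ext i j
    simp only [prod23, Matrix.of_apply, Matrix.trace, Matrix.diag_apply, Matrix.mul_apply,
      Matrix.transpose_apply, hA, Fintype.sum_prod_type]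
  have hDA : ∀ (q : Fin n × Fin n) (j : Fin M),
      (D * A) q j = (Q j - P * Q j * P) q.1 q.2 := by
    intro q j
    have hsub : (D * A) q j = A q j - (K * A) q j := by
      rw [hD, Matrix.sub_mul, Matrix.one_mul, Matrix.sub_apply]
    have hKA : (K * A) q j = (P * Q j * P) q.1 q.2 := by
      simp only [Matrix.mul_apply, hK, hA, Matrix.of_apply, Fintype.sum_prod_type]
      rw [Finset.sum_comm]
      refine Finset.sum_congr rfl fun d _ => ?_
      rw [Finset.sum_mul]
      refine Finset.sum_congr rfl fun c _ => ?_
      rw [hPe q.2 d]; ring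
    rw [hsub, hKA, Matrix.sub_apply, hA, Matrix.of_apply]
  have hX : prod23 Q (piT P Q) = Aᵀ * (D * A) := by
    ext i j
    have lhs : prod23 Q (piT P Q) i j
        = ∑ a, ∑ b, Q i a b * (Q j - P * Q j * P) a b := by
      simp only [prod23, piT, Matrix.of_apply, Matrix.trace, Matrix.diag_apply,
        Matrix.mul_apply, Matrix.transpose_apply]
    have rhs : (Aᵀ * (D * A)) i j = ∑ a, ∑ b, Q i a b * (D * A) (a, b) j := by
      rw [Matrix.mul_apply]
      simp only [Matrix.transpose_apply, hA, Matrix.of_apply, Fintype.sum_prod_type]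
    rw [lhs, rhs]
    refine Finset.sum_congr rfl fun a _ => Finset.sum_congr rfl fun b _ => ?_
    rw [hDA (a, b) j]
  rw [hG, hX]
  have e2 : Aᵀ * (D * A) = (D * A)ᴴ * (D * A) := by
    rw [hCT (D * A), Matrix.transpose_mul, hDt, Matrix.mul_assoc Aᵀ D (D * A),
      ← Matrix.mul_assoc D D A, hD2]
  have h3 : ‖Aᵀ * (D * A)‖ = ‖D * A‖ * ‖D * A‖ := by
    rw [e2]; exact Matrix.l2_opNorm_conjTranspose_mul_self _
  have h4 : ‖D * A‖ ≤ ‖A‖ := by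
    refine le_trans (Matrix.l2_opNorm_mul D A) ?_
    nlinarith [norm_nonneg A]
  have h5 : ‖Aᵀ * A‖ = ‖A‖ * ‖A‖ := by
    rw [← hCT A]; exact Matrix.l2_opNorm_conjTranspose_mul_self A
  nlinarith [norm_nonneg (D * A), norm_nonneg A, norm_nonneg (Aᵀ * A)]
end

section
/- Let Δ ∈ ℝ^{L×n×n} be a tensor, let W ∈ ℝ^{L×M} have orthonormal columns, and for each m ∈ {1,…,M} let U_m ∈ ℝ^{n×K_m} have orthonormal columns with Π_{U_m⊥} = I − U_mU_mᵀ. Define D ∈ ℝ^{M×n×n} by D(m) = Σ_l W(l,m) Δ(l), and Π_{T,K}(D) ∈ ℝ^{M×n×n} by [Π_{T,K}(D)](m) = D(m) − Π_{U_m⊥} D(m) Π_{U_m⊥}; also, for a tensor X ∈ ℝ^{L×n×n}, let Π_{T,K_m}(X) have slices X(l) − Π_{U_m⊥} X(l) Π_{U_m⊥}. Then ‖Δ ×_{2,3} Π_{T,K}(D)‖_F ≤ √M · max_{1≤m≤M} ‖Π_{T,K_m}(Δ) ×_{2,3} Π_{T,K_m}(Δ)‖, where the left-hand side is the Frobenius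 norm of an L×M matrix and the right-hand side involves spectral norms of L×L matrices. -/
open Matrix BigOperators

private lemma trace_proj_eq {n : ℕ} (P X Y : Matrix (Fin n) (Fin n) ℝ)
    (hPs : Pᵀ = P) (hPi : P * P = P) :
    (X * (Y - P * Y * P)ᵀ).trace = ((X - P * X * P) * (Y - P * Y * P)ᵀ).trace := by
  have hT : (Y - P * Y * P)ᵀ = Yᵀ - P * Yᵀ * P := by
    rw [Matrix.transpose_sub, Matrix.transpose_mul, Matrix.transpose_mul, hPs, Matrix.mul_assoc]
  have key : ∀ Z : Matrix (Fin n) (Fin n) ℝ,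
      (Z * (P * Yᵀ * P)).trace = ((P * Z * P) * Yᵀ).trace := by
    intro Z
    have h1 : Z * (P * Yᵀ * P) = (Z * P * Yᵀ) * P := by noncomm_ring
    have h2 : P * (Z * P * Yᵀ) = (P * Z * P) * Yᵀ := by noncomm_ring
    rw [h1, Matrix.trace_mul_comm, h2]
  have hPXP : P * (P * X * P) * P = P * X * P := by
    have : P * (P * X * P) * P = (P * P) * X * (P * P) := by noncomm_ring
    rw [this, hPi]
  rw [hT]
  simp only [Matrix.mul_sub, Matrix.sub_mul, Matrix.trace_sub]
  rw [key X, key (P * X * P), hPXP]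
  ring

private lemma mulVec_sq_le {L : ℕ} (G : Matrix (Fin L) (Fin L) ℝ) (w : Fin L → ℝ) :
    ∑ l, (G.mulVec w l) ^ 2 ≤ (specNorm G) ^ 2 * ∑ l, (w l) ^ 2 := by
  set v : EuclideanSpace ℝ (Fin L) := (WithLp.equiv 2 (Fin L → ℝ)).symm w with hv
  set f := LinearMap.toContinuousLinearMap (Matrix.toEuclideanLin G) with hf
  have hvn : ‖v‖ ^ 2 = ∑ l, (w l) ^ 2 := by
    rw [EuclideanSpace.norm_eq, Real.sq_sqrt (by positivity)]
    simp [hv, Real.norm_eq_abs, sq_abs]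
  have hfv : f v = (WithLp.equiv 2 (Fin L → ℝ)).symm (G.mulVec w) := by
    simp [hf, hv]
  have hfvn : ‖f v‖ ^ 2 = ∑ l, (G.mulVec w l) ^ 2 := by
    rw [hfv, EuclideanSpace.norm_eq, Real.sq_sqrt (by positivity)]
    simp [Real.norm_eq_abs, sq_abs]
  have hle : ‖f v‖ ≤ ‖f‖ * ‖v‖ := f.le_opNorm v
  have : ‖f v‖ ^ 2 ≤ (‖f‖ * ‖v‖) ^ 2 := by
    apply pow_le_pow_left₀ (norm_nonneg _) hle
  rw [hfvn, mul_pow, hvn] at this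
  exact this

/-- `‖Δ ×_{2,3} Π_{T,K}(Δ ∘ W)‖_F ≤ √M · max_m ‖Π_{T,K_m}(Δ) ×_{2,3} Π_{T,K_m}(Δ)‖`. -/
theorem stmt17 {L M n : ℕ} (K : Fin M → ℕ)
    (Δ : Fin L → Matrix (Fin n) (Fin n) ℝ)
    (W : Matrix (Fin L) (Fin M) ℝ) (hW : Wᵀ * W = 1)
    (U : ∀ m : Fin M, Matrix (Fin n) (Fin (K m)) ℝ)
    (hUo : ∀ m, (U m)ᵀ * U m = 1) :
    frobNorm (prod23 Δ (fun m =>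
        (∑ l, W l m • Δ l) -
          (1 - U m * (U m)ᵀ) * (∑ l, W l m • Δ l) * (1 - U m * (U m)ᵀ))) ≤
      Real.sqrt M *
        ⨆ m : Fin M, specNorm (prod23 (piT (1 - U m * (U m)ᵀ) Δ) (piT (1 - U m * (U m)ᵀ) Δ)) := by
  classical
  set P : ∀ m : Fin M, Matrix (Fin n) (Fin n) ℝ := fun m => 1 - U m * (U m)ᵀ with hP
  have hPs : ∀ m, (P m)ᵀ = P m := by
    intro m
    simp [hP, Matrix.transpose_sub, Matrix.transpose_mul]
  have hPi : ∀ m, P m * P m = P m := by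
    intro m
    have hA : (U m * (U m)ᵀ) * (U m * (U m)ᵀ) = U m * (U m)ᵀ := by
      calc (U m * (U m)ᵀ) * (U m * (U m)ᵀ) = U m * (((U m)ᵀ * U m) * (U m)ᵀ) := by
            simp only [Matrix.mul_assoc]
        _ = U m * (U m)ᵀ := by rw [hUo m, Matrix.one_mul]
    have : P m * P m = 1 - U m * (U m)ᵀ - (U m * (U m)ᵀ - (U m * (U m)ᵀ) * (U m * (U m)ᵀ)) := by
      simp only [hP]; noncomm_ring
    rw [this, hA]
    simp [hP]
  set G : ∀ m : Fin M, Matrix (Fin L) (Fin L) ℝ :=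
    fun m => prod23 (piT (P m) Δ) (piT (P m) Δ) with hG
  set A : Matrix (Fin L) (Fin M) ℝ := prod23 Δ (fun m =>
        (∑ l, W l m • Δ l) -
          (1 - U m * (U m)ᵀ) * (∑ l, W l m • Δ l) * (1 - U m * (U m)ᵀ)) with hA
  have hentry : ∀ l m, A l m = (G m).mulVec (fun l' => W l' m) l := by
    intro l m
    have hD : (∑ l', W l' m • Δ l') - P m * (∑ l', W l' m • Δ l') * P m
        = ∑ l', W l' m • (piT (P m) Δ l') := by
      rw [Finset.mul_sum, Finset.sum_mul]
      rw [← Finset.sum_sub_distrib]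
      congr 1; funext l'
      simp [piT, Matrix.mul_smul, Matrix.smul_mul, smul_sub]
    have := trace_proj_eq (P m) (Δ l) (∑ l', W l' m • Δ l') (hPs m) (hPi m)
    calc A l m = (Δ l * ((∑ l', W l' m • Δ l') - P m * (∑ l', W l' m • Δ l') * P m)ᵀ).trace := by
          simp [hA, prod23, hP]
      _ = ((Δ l - P m * Δ l * P m) * ((∑ l', W l' m • Δ l') - P m * (∑ l', W l' m • Δ l') * P m)ᵀ).trace := this
      _ = ((piT (P m) Δ l) * (∑ l', W l' m • (piT (P m) Δ l'))ᵀ).trace := by rw [hD]; rfl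
      _ = ∑ l', (G m) l l' * W l' m := by
          rw [Matrix.transpose_sum, Finset.mul_sum, Matrix.trace_sum]
          congr 1; funext l'
          simp [hG, prod23, Matrix.transpose_smul, Matrix.mul_smul, Matrix.trace_smul, mul_comm]
      _ = (G m).mulVec (fun l' => W l' m) l := by
          simp [Matrix.mulVec, dotProduct]
  set C : ℝ := ⨆ m : Fin M, specNorm (G m) with hC
  rcases Nat.eq_zero_or_pos M with hM | hM
  · subst hM
    have : frobNorm A = 0 := by simp [frobNorm]
    rw [this]
    simp
  have hne : Nonempty (Fin M) := ⟨⟨0, hM⟩⟩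
  have hbdd : BddAbove (Set.range fun m => specNorm (G m)) :=
    Set.Finite.bddAbove (Set.finite_range _)
  have hgC : ∀ m, specNorm (G m) ≤ C := fun m => le_ciSup hbdd m
  have hC0 : 0 ≤ C := le_trans (norm_nonneg _) (hgC ⟨0, hM⟩)
  have hWcol : ∀ m : Fin M, ∑ l, (W l m) ^ 2 = 1 := by
    intro m
    have := congrArg (fun X => X m m) hW
    simpa [Matrix.mul_apply, Matrix.one_apply, sq] using this
  have hsum : ∑ l, ∑ m, (A l m) ^ 2 ≤ M * C ^ 2 := by
    rw [Finset.sum_comm]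
    calc ∑ m, ∑ l, (A l m) ^ 2 ≤ ∑ m : Fin M, C ^ 2 := by
          apply Finset.sum_le_sum
          intro m _
          calc ∑ l, (A l m) ^ 2 = ∑ l, ((G m).mulVec (fun l' => W l' m) l) ^ 2 := by
                congr 1; funext l; rw [hentry]
            _ ≤ (specNorm (G m)) ^ 2 * ∑ l, (W l m) ^ 2 := mulVec_sq_le _ _
            _ = (specNorm (G m)) ^ 2 := by rw [hWcol m, mul_one]
            _ ≤ C ^ 2 := pow_le_pow_left₀ (norm_nonneg _) (hgC m) 2
      _ = M * C ^ 2 := by simp [Finset.sum_const, nsmul_eq_mul]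
  calc frobNorm A = Real.sqrt (∑ l, ∑ m, (A l m) ^ 2) := rfl
    _ ≤ Real.sqrt (M * C ^ 2) := Real.sqrt_le_sqrt hsum
    _ = Real.sqrt M * C := by
        rw [Real.sqrt_mul (by positivity), Real.sqrt_sq hC0]
end

section
/- In the Mixture Multilayer Stochastic Block Model described in the context, for every m ∈ {1,…,M} and every t > 0: P( ‖Π_{T,K_m}(Q_*) ×_{2,3} Π_{T,K_m}(Δ)‖_F > 3 t n L p_max^{3/2} ) ≤ 2 K̇ L · exp( −(t²/2) / ( 1 + t/(3√(p_max · n · g_min)) ) ), where Π_{T,K_m}(Q_*) ∈ ℝ^{M×n×n}, Π_{T,K_m}(Δ) ∈ ℝ^{L×n×n}, and the Frobenius norm is that of the resulting M×L matrix. -/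
open Matrix BigOperators MeasureTheory

open Real

lemma lemA (x : ℝ) : (1 - x) * Real.exp x ≤ 1 := by
  have h : 1 - x ≤ Real.exp (-x) := by
    have := Real.add_one_le_exp (-x); linarith
  calc (1 - x) * Real.exp x ≤ Real.exp (-x) * Real.exp x := by
        apply mul_le_mul_of_nonneg_right h (Real.exp_pos x).le
    _ = 1 := by rw [← Real.exp_add]; simp

lemma lemB {x : ℝ} (hx : 0 ≤ x) : (2 - x) * Real.exp x ≤ x + 2 := by
  set g : ℝ → ℝ := fun y => (2 - y) * Real.exp y - y - 2 with hg
  have hderiv : ∀ y : ℝ, HasDerivAt g ((1 - y) * Real.exp y - 1) y := by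
    intro y
    have h1 : HasDerivAt (fun y : ℝ => (2 - y)) (-1) y := by
      simpa using (hasDerivAt_id y).const_sub 2
    have h2 : HasDerivAt (fun y : ℝ => (2 - y) * Real.exp y)
        ((-1) * Real.exp y + (2 - y) * Real.exp y) y := h1.mul (Real.hasDerivAt_exp y)
    have h3 := (h2.sub (hasDerivAt_id y)).sub_const 2
    have he : (-1) * Real.exp y + (2 - y) * Real.exp y - 1 = (1 - y) * Real.exp y - 1 := by
      ring
    rw [he] at h3
    exact h3
  have hanti : AntitoneOn g (Set.Ici (0:ℝ)) := by
    apply antitoneOn_of_deriv_nonpos (convex_Ici 0)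
      (Continuous.continuousOn (by continuity))
      (fun y _ => (hderiv y).differentiableAt.differentiableWithinAt) ?_
    intro y _
    rw [(hderiv y).deriv]
    have := lemA y
    linarith
  have h0 : g 0 = 0 := by simp [hg]
  have := hanti (Set.self_mem_Ici) (Set.mem_Ici.2 hx) hx
  rw [h0] at this
  simp only [hg] at this
  linarith

lemma lemC {x : ℝ} (hx : 0 ≤ x) : (1 - x/3) * (Real.exp x - 1 - x) ≤ x^2 / 2 := by
  set f : ℝ → ℝ := fun y => (1 - y/3) * (Real.exp y - 1 - y) - y^2/2 with hf
  have hderiv : ∀ y : ℝ, HasDerivAt f (((2 - y) * Real.exp y - y - 2)/3) y := by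
    intro y
    have h1 : HasDerivAt (fun y : ℝ => 1 - y/3) (-(1/3)) y := by
      simpa using ((hasDerivAt_id y).div_const 3).const_sub 1
    have h2 : HasDerivAt (fun y : ℝ => Real.exp y - 1 - y) (Real.exp y - 1) y := by
      have := ((Real.hasDerivAt_exp y).sub_const 1).sub (hasDerivAt_id y)
      exact this
    have h3 := h1.mul h2
    have h4 : HasDerivAt (fun y : ℝ => y^2/2) y y := by
      have := (hasDerivAt_pow 2 y).div_const 2
      norm_num at this
      exact this
    have h5 := h3.sub h4
    have he : (-(1/3)) * (Real.exp y - 1 - y) + (1 - y/3) * (Real.exp y - 1) - y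
        = ((2 - y) * Real.exp y - y - 2)/3 := by ring
    rw [he] at h5
    exact h5
  have hanti : AntitoneOn f (Set.Ici (0:ℝ)) := by
    apply antitoneOn_of_deriv_nonpos (convex_Ici 0)
      (Continuous.continuousOn (by continuity))
      (fun y _ => (hderiv y).differentiableAt.differentiableWithinAt) ?_
    intro y hy
    rw [(hderiv y).deriv]
    rw [interior_Ici] at hy
    have := lemB (le_of_lt hy)
    linarith
  have h0 : f 0 = 0 := by simp [hf]
  have := hanti (Set.self_mem_Ici) (Set.mem_Ici.2 hx) hx
  rw [h0] at this
  simp only [hf] at this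
  linarith

lemma lemD {x : ℝ} (hx : x ≤ 0) : Real.exp x - 1 - x ≤ x^2 / 2 := by
  set h : ℝ → ℝ := fun y => 1 + y + y^2/2 - Real.exp y with hh
  have hderiv : ∀ y : ℝ, HasDerivAt h (1 + y - Real.exp y) y := by
    intro y
    have h4 : HasDerivAt (fun y : ℝ => y^2/2) y y := by
      have := (hasDerivAt_pow 2 y).div_const 2
      norm_num at this
      exact this
    have h1 := (((hasDerivAt_const y (1:ℝ)).add (hasDerivAt_id y)).add h4).sub
      (Real.hasDerivAt_exp y)
    have he : 0 + 1 + y - Real.exp y = 1 + y - Real.exp y := by ring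
    rw [he] at h1
    exact h1
  have hanti : AntitoneOn h (Set.Iic (0:ℝ)) := by
    apply antitoneOn_of_deriv_nonpos (convex_Iic 0)
      (Continuous.continuousOn (by continuity))
      (fun y _ => (hderiv y).differentiableAt.differentiableWithinAt) ?_
    intro y _
    rw [(hderiv y).deriv]
    have := Real.add_one_le_exp y
    linarith
  have h0 : h 0 = 0 := by simp [hh]
  have := hanti (Set.mem_Iic.2 hx) (Set.self_mem_Iic) hx
  rw [h0] at this
  simp only [hh] at this
  linarith

lemma lemE {x b : ℝ} (hxb : |x| ≤ b) (hb3 : b < 3) :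
    Real.exp x - 1 - x ≤ x^2 / (2 * (1 - b/3)) := by
  have hb0 : 0 ≤ b := le_trans (abs_nonneg x) hxb
  have hden : 0 < 1 - b/3 := by linarith
  rcases le_or_gt 0 x with hx | hx
  · have hx3 : x ≤ b := le_trans (le_abs_self x) hxb
    have h1 := lemC hx
    have hxden : 0 < 1 - x/3 := by linarith
    have h2 : Real.exp x - 1 - x ≤ x^2 / (2 * (1 - x/3)) := by
      rw [le_div_iff₀ (by positivity)]
      nlinarith
    refine h2.trans ?_
    apply div_le_div_of_nonneg_left (by positivity) (by positivity)
    nlinarith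
  · have h1 := lemD hx.le
    refine h1.trans ?_
    rw [div_le_div_iff₀ (by norm_num) (by positivity)]
    nlinarith [sq_nonneg x]

open MeasureTheory ProbabilityTheory in
lemma bern_integral {Ω : Type} [MeasurableSpace Ω] (μ : Measure Ω) [IsProbabilityMeasure μ]
    (χ : Ω → ℝ) (hm : Measurable χ) (h01 : ∀ ω, χ ω = 0 ∨ χ ω = 1)
    (ρ : ℝ) (hρ : ρ ∈ Set.Icc (0:ℝ) 1) (hB : μ {ω | χ ω = 1} = ENNReal.ofReal ρ)
    (θ : ℝ) :
    ∫ ω, Real.exp (θ * (χ ω - ρ)) ∂μ = Real.exp (-(θ*ρ)) * (1 + ρ * (Real.exp θ - 1)) := by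
  have hset : MeasurableSet {ω | χ ω = 1} := hm (measurableSet_singleton 1)
  have hχind : χ = Set.indicator {ω | χ ω = 1} (fun _ => (1:ℝ)) := by
    funext ω
    rcases h01 ω with h | h
    · rw [h, Set.indicator_of_notMem]
      simp [Set.mem_setOf_eq, h]
    · rw [h, Set.indicator_of_mem]
      simpa [Set.mem_setOf_eq] using h
  have hχint : Integrable χ μ := by
    rw [hχind]
    exact (integrable_const (1:ℝ)).indicator hset
  have hχval : ∫ ω, χ ω ∂μ = ρ := by
    rw [hχind, integral_indicator_const _ hset]
    simp [measureReal_def, hB, ENNReal.toReal_ofReal hρ.1]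
  have hpt : ∀ ω, Real.exp (θ * (χ ω - ρ))
      = Real.exp (-(θ*ρ)) * (1 + (Real.exp θ - 1) * χ ω) := by
    intro ω
    rcases h01 ω with h | h <;> rw [h]
    · rw [show θ*((0:ℝ)-ρ) = -(θ*ρ) by ring]
      simp
    · rw [show θ*((1:ℝ)-ρ) = -(θ*ρ) + θ by ring, Real.exp_add,
        show (1 + (Real.exp θ - 1) * 1 : ℝ) = Real.exp θ by ring]
  calc ∫ ω, Real.exp (θ * (χ ω - ρ)) ∂μ
      = ∫ ω, Real.exp (-(θ*ρ)) * (1 + (Real.exp θ - 1) * χ ω) ∂μ := by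
        exact integral_congr_ae (Filter.Eventually.of_forall hpt)
    _ = Real.exp (-(θ*ρ)) * ∫ ω, (1 + (Real.exp θ - 1) * χ ω) ∂μ := by
        rw [integral_const_mul]
    _ = Real.exp (-(θ*ρ)) * (1 + ρ * (Real.exp θ - 1)) := by
        rw [integral_add (integrable_const 1) (hχint.const_mul _)]
        rw [MeasureTheory.integral_const_mul, hχval]
        simp [mul_comm]

open MeasureTheory ProbabilityTheory in
lemma bern_mgf_le {Ω : Type} [MeasurableSpace Ω] (μ : Measure Ω) [IsProbabilityMeasure μ]
    (χ : Ω → ℝ) (hm : Measurable χ) (h01 : ∀ ω, χ ω = 0 ∨ χ ω = 1)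
    (ρ : ℝ) (hρ : ρ ∈ Set.Icc (0:ℝ) 1) (hB : μ {ω | χ ω = 1} = ENNReal.ofReal ρ)
    (c b lam : ℝ) (hc : |c| ≤ b) (hlam : 0 ≤ lam) (hlb : lam * b < 3) :
    mgf (fun ω => c * (χ ω - ρ)) μ lam
      ≤ Real.exp (ρ * (lam*c)^2 / (2*(1 - lam*b/3))) := by
  have key : ∀ ω, lam * (c * (χ ω - ρ)) = (lam * c) * (χ ω - ρ) := fun ω => by ring
  have : mgf (fun ω => c * (χ ω - ρ)) μ lam
      = Real.exp (-(lam*c*ρ)) * (1 + ρ * (Real.exp (lam*c) - 1)) := by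
    rw [mgf]
    rw [show (fun ω => Real.exp (lam * (c * (χ ω - ρ))))
        = fun ω => Real.exp ((lam * c) * (χ ω - ρ)) from funext fun ω => by rw [key]]
    exact bern_integral μ χ hm h01 ρ hρ hB (lam * c)
  rw [this]
  set θ := lam * c with hθ
  have h1 : 1 + ρ * (Real.exp θ - 1) ≤ Real.exp (ρ * (Real.exp θ - 1)) := by
    have := Real.add_one_le_exp (ρ * (Real.exp θ - 1)); linarith
  have h1' : 0 ≤ 1 + ρ * (Real.exp θ - 1) := by
    have he : Real.exp θ - 1 ≥ -1 := by have := Real.exp_pos θ; linarith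
    nlinarith [hρ.1, hρ.2]
  have h2 : Real.exp (-(θ*ρ)) * (1 + ρ * (Real.exp θ - 1))
      ≤ Real.exp (-(θ*ρ)) * Real.exp (ρ * (Real.exp θ - 1)) :=
    mul_le_mul_of_nonneg_left h1 (Real.exp_pos _).le
  refine h2.trans ?_
  rw [← Real.exp_add]
  apply Real.exp_le_exp.2
  have hθb : |θ| ≤ lam * b := by
    rw [hθ, abs_mul, abs_of_nonneg hlam]
    exact mul_le_mul_of_nonneg_left hc hlam
  have hE := lemE hθb hlb
  have hden : 0 < 1 - lam*b/3 := by
    have : lam*b/3 < 1 := by linarith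
    linarith
  have : Real.exp θ - 1 - θ ≤ θ^2 / (2*(1 - lam*b/3)) := hE
  have hmul : ρ * (Real.exp θ - 1 - θ) ≤ ρ * (θ^2 / (2*(1 - lam*b/3))) :=
    mul_le_mul_of_nonneg_left this hρ.1
  calc -(θ*ρ) + ρ * (Real.exp θ - 1) = ρ * (Real.exp θ - 1 - θ) := by ring
    _ ≤ ρ * (θ^2 / (2*(1 - lam*b/3))) := hmul
    _ = ρ * θ^2 / (2*(1 - lam*b/3)) := by ring

open MeasureTheory ProbabilityTheory in
lemma bernstein_onesided {Ω ι : Type} [MeasurableSpace Ω] [Fintype ι]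
    (μ : Measure Ω) [IsProbabilityMeasure μ]
    (χ : ι → Ω → ℝ) (hm : ∀ q, Measurable (χ q)) (h01 : ∀ q ω, χ q ω = 0 ∨ χ q ω = 1)
    (ρ : ι → ℝ) (hρ : ∀ q, ρ q ∈ Set.Icc (0:ℝ) 1)
    (hB : ∀ q, μ {ω | χ q ω = 1} = ENNReal.ofReal (ρ q))
    (hind : iIndepFun χ μ)
    (c : ι → ℝ) (b V s : ℝ) (hb : 0 < b) (hc : ∀ q, |c q| ≤ b)
    (hV : ∑ q, (c q)^2 * ρ q ≤ V) (hV0 : 0 < V) (hs : 0 ≤ s) :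
    μ {ω | s ≤ ∑ q, c q * (χ q ω - ρ q)}
      ≤ ENNReal.ofReal (Real.exp (-(s^2) / (2*(V + b*s/3)))) := by
  classical
  set D : ℝ := V + b*s/3 with hD
  have hD0 : 0 < D := by positivity
  set lam : ℝ := s / D with hlam
  have hlam0 : 0 ≤ lam := div_nonneg hs hD0.le
  have hlamb : lam * b < 3 := by
    rw [hlam, div_mul_eq_mul_div, div_lt_iff₀ hD0, hD]
    nlinarith
  have hden : 1 - lam*b/3 = V / D := by
    rw [hlam]; field_simp; ring
  -- the random variables
  set Y : ι → Ω → ℝ := fun q ω => c q * (χ q ω - ρ q) with hY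
  have hYm : ∀ q, Measurable (Y q) := fun q => ((hm q).sub measurable_const).const_mul _
  have hindY : iIndepFun Y μ := by
    apply hind.comp (fun q x => c q * (x - ρ q))
    exact fun q => (measurable_id.sub measurable_const).const_mul _
  have hYsum : (∑ q, Y q) = fun ω => ∑ q, c q * (χ q ω - ρ q) := by
    funext ω; rw [Finset.sum_apply]
  -- integrability
  have hbound : ∀ q ω, |Y q ω| ≤ b := by
    intro q ω
    rw [hY, abs_mul]
    have h1 : |χ q ω - ρ q| ≤ 1 := by
      rcases h01 q ω with h | h <;> rw [h] <;>
        rw [abs_le] <;> constructor <;> linarith [(hρ q).1, (hρ q).2]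
    calc |c q| * |χ q ω - ρ q| ≤ |c q| * 1 := by
          exact mul_le_mul_of_nonneg_left h1 (abs_nonneg _)
      _ ≤ b := by rw [mul_one]; exact hc q
  have hint : Integrable (fun ω => Real.exp (lam * (∑ q, Y q) ω)) μ := by
    apply Integrable.mono' (integrable_const (Real.exp (lam * (Fintype.card ι * b))))
    · apply Measurable.aestronglyMeasurable
      apply Measurable.exp
      apply Measurable.const_mul
      rw [hYsum]
      exact Finset.measurable_sum _ fun q _ => hYm q
    · apply Filter.Eventually.of_forall
      intro ω
      rw [Real.norm_eq_abs, Real.abs_exp, Real.exp_le_exp]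
      apply mul_le_mul_of_nonneg_left _ hlam0
      rw [hYsum]
      calc ∑ q, c q * (χ q ω - ρ q) ≤ ∑ q, |c q * (χ q ω - ρ q)| :=
            Finset.sum_le_sum fun q _ => le_abs_self _
        _ ≤ ∑ _q : ι, b := Finset.sum_le_sum fun q _ => hbound q ω
        _ = Fintype.card ι * b := by
            rw [Finset.sum_const, Finset.card_univ, nsmul_eq_mul]
  -- Chernoff bound
  have hchern := measure_ge_le_exp_mul_mgf (X := ∑ q, Y q) (μ := μ) s hlam0 hint
  -- mgf factorization and bound
  have hmgf : mgf (∑ q, Y q) μ lam ≤ Real.exp (lam^2 * V / (2*(1 - lam*b/3))) := by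
    have hprod : mgf (∑ q ∈ Finset.univ, Y q) μ lam = ∏ q, mgf (Y q) μ lam :=
      hindY.mgf_sum hYm Finset.univ
    rw [hprod]
    have hterm : ∀ q, mgf (Y q) μ lam ≤ Real.exp (ρ q * (lam * c q)^2 / (2*(1 - lam*b/3))) :=
      fun q => bern_mgf_le μ (χ q) (hm q) (h01 q) (ρ q) (hρ q) (hB q) (c q) b lam
        (hc q) hlam0 hlamb
    calc ∏ q, mgf (Y q) μ lam
        ≤ ∏ q, Real.exp (ρ q * (lam * c q)^2 / (2*(1 - lam*b/3))) :=
          Finset.prod_le_prod (fun q _ => mgf_nonneg) (fun q _ => hterm q)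
      _ = Real.exp (∑ q, ρ q * (lam * c q)^2 / (2*(1 - lam*b/3))) := by
          rw [Real.exp_sum]
      _ ≤ Real.exp (lam^2 * V / (2*(1 - lam*b/3))) := by
          apply Real.exp_le_exp.2
          have hd : 0 < 1 - lam*b/3 := by rw [hden]; positivity
          rw [← Finset.sum_div]
          have hsum : ∑ q, ρ q * (lam * c q)^2 ≤ lam^2 * V := by
            calc ∑ q, ρ q * (lam * c q)^2 = lam^2 * ∑ q, (c q)^2 * ρ q := by
                  rw [Finset.mul_sum]
                  exact Finset.sum_congr rfl fun q _ => by ring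
              _ ≤ lam^2 * V := mul_le_mul_of_nonneg_left hV (sq_nonneg lam)
          exact div_le_div_of_nonneg_right hsum (by positivity)
  -- combine
  have hval : Real.exp (-lam * s) * Real.exp (lam^2 * V / (2*(1 - lam*b/3)))
      = Real.exp (-(s^2) / (2*D)) := by
    rw [← Real.exp_add]
    congr 1
    rw [hden, hlam]
    field_simp
    ring
  have hfinal : (μ {ω | s ≤ (∑ q, Y q) ω}).toReal ≤ Real.exp (-(s^2) / (2*D)) := by
    refine hchern.trans ?_
    rw [← hval]
    exact mul_le_mul_of_nonneg_left hmgf (Real.exp_pos _).le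
  have hne : μ {ω | s ≤ (∑ q, Y q) ω} ≠ ⊤ := measure_ne_top μ _
  have hle : μ {ω | s ≤ (∑ q, Y q) ω} ≤ ENNReal.ofReal (Real.exp (-(s^2) / (2*D))) := by
    rw [← ENNReal.ofReal_toReal hne]
    exact ENNReal.ofReal_le_ofReal hfinal
  have hsets : {ω | s ≤ ∑ q, c q * (χ q ω - ρ q)} = {ω | s ≤ (∑ q, Y q) ω} := by
    ext ω; simp only [Set.mem_setOf_eq, hYsum]
  rw [hsets]
  exact hle

open MeasureTheory ProbabilityTheory in
lemma bernstein_twosided {Ω ι : Type} [MeasurableSpace Ω] [Fintype ι]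
    (μ : Measure Ω) [IsProbabilityMeasure μ]
    (χ : ι → Ω → ℝ) (hm : ∀ q, Measurable (χ q)) (h01 : ∀ q ω, χ q ω = 0 ∨ χ q ω = 1)
    (ρ : ι → ℝ) (hρ : ∀ q, ρ q ∈ Set.Icc (0:ℝ) 1)
    (hB : ∀ q, μ {ω | χ q ω = 1} = ENNReal.ofReal (ρ q))
    (hind : iIndepFun χ μ)
    (c : ι → ℝ) (b V s : ℝ) (hb : 0 < b) (hc : ∀ q, |c q| ≤ b)
    (hV : ∑ q, (c q)^2 * ρ q ≤ V) (hV0 : 0 < V) (hs : 0 ≤ s) :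
    μ {ω | s < |∑ q, c q * (χ q ω - ρ q)|}
      ≤ ENNReal.ofReal (2 * Real.exp (-(s^2) / (2*(V + b*s/3)))) := by
  have h1 := bernstein_onesided μ χ hm h01 ρ hρ hB hind c b V s hb hc hV hV0 hs
  have h2 := bernstein_onesided μ χ hm h01 ρ hρ hB hind (fun q => -(c q)) b V s hb
    (fun q => by rw [abs_neg]; exact hc q)
    (by rw [Finset.sum_congr rfl (fun (q:ι) _ => show (-(c q))^2 * ρ q = (c q)^2 * ρ q by ring)]
        exact hV) hV0 hs
  have hsub : {ω | s < |∑ q, c q * (χ q ω - ρ q)|}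
      ⊆ {ω | s ≤ ∑ q, c q * (χ q ω - ρ q)} ∪ {ω | s ≤ ∑ q, -(c q) * (χ q ω - ρ q)} := by
    intro ω hω
    simp only [Set.mem_setOf_eq] at hω
    rcases abs_cases (∑ q, c q * (χ q ω - ρ q)) with ⟨he, _⟩ | ⟨he, _⟩
    · left; rw [Set.mem_setOf_eq]; linarith [hω, he.symm.le]
    · right
      rw [Set.mem_setOf_eq]
      have : ∑ q, -(c q) * (χ q ω - ρ q) = -∑ q, c q * (χ q ω - ρ q) := by
        rw [← Finset.sum_neg_distrib]; congr 1; funext q; ring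
      rw [this]
      linarith
  calc μ {ω | s < |∑ q, c q * (χ q ω - ρ q)|}
      ≤ μ ({ω | s ≤ ∑ q, c q * (χ q ω - ρ q)} ∪ {ω | s ≤ ∑ q, -(c q) * (χ q ω - ρ q)}) :=
        measure_mono hsub
    _ ≤ μ {ω | s ≤ ∑ q, c q * (χ q ω - ρ q)} + μ {ω | s ≤ ∑ q, -(c q) * (χ q ω - ρ q)} :=
        measure_union_le _ _
    _ ≤ ENNReal.ofReal (Real.exp (-(s^2) / (2*(V + b*s/3))))
        + ENNReal.ofReal (Real.exp (-(s^2) / (2*(V + b*s/3)))) := add_le_add h1 h2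
    _ = ENNReal.ofReal (2 * Real.exp (-(s^2) / (2*(V + b*s/3)))) := by
        rw [← ENNReal.ofReal_add (Real.exp_pos _).le (Real.exp_pos _).le]
        congr 1
        ring

open Matrix in
lemma trace_proj' {n : ℕ} (Pi X Y : Matrix (Fin n) (Fin n) ℝ)
    (hPit : Piᵀ = Pi) (hPP : Pi * Pi = Pi) :
    ((X - Pi*X*Pi) * (Y - Pi*Y*Pi)ᵀ).trace = ((X - Pi*X*Pi) * Yᵀ).trace := by
  have e1 : Pi * (Pi*X*Pi) = Pi*X*Pi := by
    rw [← Matrix.mul_assoc, ← Matrix.mul_assoc, hPP]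
  have e2 : (Pi*X*Pi)*Pi = Pi*X*Pi := by
    rw [Matrix.mul_assoc, hPP]
  have hWP : Pi * (X - Pi*X*Pi) * Pi = 0 := by
    rw [Matrix.mul_sub, Matrix.sub_mul, e1, e2, sub_self]
  have hYt : (Pi*Y*Pi)ᵀ = Pi * Yᵀ * Pi := by
    rw [transpose_mul, transpose_mul, hPit, Matrix.mul_assoc]
  have key : ((X - Pi*X*Pi) * (Pi*Y*Pi)ᵀ).trace = 0 := by
    have c1 : (X - Pi*X*Pi) * (Pi * Yᵀ * Pi) = ((X - Pi*X*Pi) * (Pi * Yᵀ)) * Pi := by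
      rw [← Matrix.mul_assoc]
    have c2 : Pi * ((X - Pi*X*Pi) * (Pi * Yᵀ)) = ((Pi * (X - Pi*X*Pi)) * Pi) * Yᵀ := by
      rw [← Matrix.mul_assoc, Matrix.mul_assoc (Pi * (X - Pi*X*Pi)) Pi Yᵀ,
        ← Matrix.mul_assoc]
    rw [hYt, c1, trace_mul_comm, c2, hWP, Matrix.zero_mul, trace_zero]
  have hexp : (X - Pi*X*Pi) * (Y - Pi*Y*Pi)ᵀ
      = (X - Pi*X*Pi) * Yᵀ - (X - Pi*X*Pi) * (Pi*Y*Pi)ᵀ := by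
    rw [transpose_sub, Matrix.mul_sub]
  rw [hexp, trace_sub, key, sub_zero]

open Matrix in
lemma trace_proj {n : ℕ} (S X Y : Matrix (Fin n) (Fin n) ℝ)
    (hS : Sᵀ = S) (hSS : S * S = S) :
    ((X - (1-S)*X*(1-S)) * (Y - (1-S)*Y*(1-S))ᵀ).trace
      = ((X - (1-S)*X*(1-S)) * Yᵀ).trace := by
  apply trace_proj'
  · rw [transpose_sub, transpose_one, hS]
  · have e : ((1:Matrix (Fin n) (Fin n) ℝ)-S) * (1-S) = 1 - S - S + S*S := by noncomm_ring
    rw [e, hSS]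
    abel

open Matrix in
lemma trace_as_sum {n : ℕ} (W D : Matrix (Fin n) (Fin n) ℝ) :
    (W * Dᵀ).trace = ∑ i, ∑ j, W i j * D i j := by
  rw [Matrix.trace]
  apply Finset.sum_congr rfl
  intro i _
  rw [Matrix.diag_apply, Matrix.mul_apply]
  apply Finset.sum_congr rfl
  intro j _
  rw [Matrix.transpose_apply]

open Finset in
lemma filter_le_split (n : ℕ) :
    Finset.univ.filter (fun p : Fin n × Fin n => p.1 ≤ p.2)
      = (Finset.univ.filter (fun p : Fin n × Fin n => p.1 < p.2))
        ∪ (Finset.univ.filter (fun p : Fin n × Fin n => p.1 = p.2)) := by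
  rw [← Finset.filter_or]
  apply Finset.filter_congr
  intro p _
  simp [le_iff_lt_or_eq]

open Finset in
lemma filter_le_disj (n : ℕ) :
    Disjoint (Finset.univ.filter (fun p : Fin n × Fin n => p.1 < p.2))
      (Finset.univ.filter (fun p : Fin n × Fin n => p.1 = p.2)) := by
  rw [Finset.disjoint_left]
  intro p hp hp'
  simp only [Finset.mem_filter] at hp hp'
  exact absurd hp'.2 (ne_of_lt hp.2)

open Finset in
lemma sum_swap_lt {n : ℕ} (f : Fin n → Fin n → ℝ) :
    ∑ p ∈ Finset.univ.filter (fun p : Fin n × Fin n => ¬ p.1 ≤ p.2), f p.1 p.2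
      = ∑ p ∈ Finset.univ.filter (fun p : Fin n × Fin n => p.1 < p.2), f p.2 p.1 := by
  apply Finset.sum_equiv (Equiv.prodComm (Fin n) (Fin n))
  · intro p
    simp only [Finset.mem_filter, Finset.mem_univ, true_and, Equiv.prodComm_apply,
      Prod.fst_swap, Prod.snd_swap]
    exact not_le
  · intro p hp
    simp only [Equiv.prodComm_apply, Prod.fst_swap, Prod.snd_swap]

open Finset in
lemma sum_sym_pairs {n : ℕ} (W D : Matrix (Fin n) (Fin n) ℝ)
    (hD : ∀ i j, D i j = D j i) :
    ∑ p ∈ Finset.univ.filter (fun p : Fin n × Fin n => p.1 ≤ p.2),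
      (if p.1 = p.2 then W p.1 p.1 else W p.1 p.2 + W p.2 p.1) * D p.1 p.2
    = ∑ i, ∑ j, W i j * D i j := by
  classical
  have htot : ∑ i, ∑ j, W i j * D i j
      = ∑ p ∈ (Finset.univ : Finset (Fin n × Fin n)), W p.1 p.2 * D p.1 p.2 := by
    rw [Fintype.sum_prod_type]
  have hswap : ∑ p ∈ Finset.univ.filter (fun p : Fin n × Fin n => ¬ p.1 ≤ p.2),
        W p.1 p.2 * D p.1 p.2
      = ∑ p ∈ Finset.univ.filter (fun p : Fin n × Fin n => p.1 < p.2),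
        W p.2 p.1 * D p.1 p.2 := by
    rw [sum_swap_lt (fun i j => W i j * D i j)]
    exact Finset.sum_congr rfl fun p _ => by rw [hD p.2 p.1]
  rw [htot, ← Finset.sum_filter_add_sum_filter_not Finset.univ
    (fun p : Fin n × Fin n => p.1 ≤ p.2), hswap, filter_le_split,
    Finset.sum_union (filter_le_disj n), Finset.sum_union (filter_le_disj n)]
  have hlt : ∑ p ∈ Finset.univ.filter (fun p : Fin n × Fin n => p.1 < p.2),
      (if p.1 = p.2 then W p.1 p.1 else W p.1 p.2 + W p.2 p.1) * D p.1 p.2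
      = ∑ p ∈ Finset.univ.filter (fun p : Fin n × Fin n => p.1 < p.2),
        (W p.1 p.2 * D p.1 p.2 + W p.2 p.1 * D p.1 p.2) := by
    apply Finset.sum_congr rfl
    intro p hp
    simp only [Finset.mem_filter] at hp
    rw [if_neg (ne_of_lt hp.2)]
    ring
  have heq : ∑ p ∈ Finset.univ.filter (fun p : Fin n × Fin n => p.1 = p.2),
      (if p.1 = p.2 then W p.1 p.1 else W p.1 p.2 + W p.2 p.1) * D p.1 p.2
      = ∑ p ∈ Finset.univ.filter (fun p : Fin n × Fin n => p.1 = p.2),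
        W p.1 p.2 * D p.1 p.2 := by
    apply Finset.sum_congr rfl
    intro p hp
    simp only [Finset.mem_filter] at hp
    rw [if_pos hp.2]
    rw [← hp.2]
  rw [hlt, heq, Finset.sum_add_distrib]
  ring

open Finset in
lemma sum_sym_pairs_sq {n : ℕ} (W : Matrix (Fin n) (Fin n) ℝ)
    (ρ : Fin n → Fin n → ℝ) (pm : ℝ) (hpm : 0 ≤ pm)
    (hρ : ∀ i j, 0 ≤ ρ i j ∧ ρ i j ≤ pm) :
    ∑ p ∈ Finset.univ.filter (fun p : Fin n × Fin n => p.1 ≤ p.2),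
      (if p.1 = p.2 then W p.1 p.1 else W p.1 p.2 + W p.2 p.1)^2 * ρ p.1 p.2
    ≤ 2 * pm * ∑ i, ∑ j, (W i j)^2 := by
  classical
  have step1 : ∑ p ∈ Finset.univ.filter (fun p : Fin n × Fin n => p.1 ≤ p.2),
      (if p.1 = p.2 then W p.1 p.1 else W p.1 p.2 + W p.2 p.1)^2 * ρ p.1 p.2
      ≤ ∑ p ∈ Finset.univ.filter (fun p : Fin n × Fin n => p.1 ≤ p.2),
        (if p.1 = p.2 then 2*(W p.1 p.1)^2 else 2*((W p.1 p.2)^2 + (W p.2 p.1)^2)) * pm := by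
    apply Finset.sum_le_sum
    intro p hp
    have h1 : (if p.1 = p.2 then W p.1 p.1 else W p.1 p.2 + W p.2 p.1)^2
        ≤ (if p.1 = p.2 then 2*(W p.1 p.1)^2 else 2*((W p.1 p.2)^2 + (W p.2 p.1)^2)) := by
      by_cases h : p.1 = p.2
      · rw [if_pos h, if_pos h]
        nlinarith [sq_nonneg (W p.1 p.1)]
      · rw [if_neg h, if_neg h]
        nlinarith [sq_nonneg (W p.1 p.2 - W p.2 p.1)]
    have h2 : 0 ≤ (if p.1 = p.2 then 2*(W p.1 p.1)^2 else 2*((W p.1 p.2)^2 + (W p.2 p.1)^2)) := by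
      by_cases h : p.1 = p.2 <;> simp [h] <;> positivity
    calc (if p.1 = p.2 then W p.1 p.1 else W p.1 p.2 + W p.2 p.1)^2 * ρ p.1 p.2
        ≤ (if p.1 = p.2 then 2*(W p.1 p.1)^2 else 2*((W p.1 p.2)^2 + (W p.2 p.1)^2)) * ρ p.1 p.2 :=
          mul_le_mul_of_nonneg_right h1 (hρ p.1 p.2).1
      _ ≤ (if p.1 = p.2 then 2*(W p.1 p.1)^2 else 2*((W p.1 p.2)^2 + (W p.2 p.1)^2)) * pm :=
          mul_le_mul_of_nonneg_left (hρ p.1 p.2).2 h2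
  refine step1.trans ?_
  -- split the sum over ordered pairs
  rw [filter_le_split, Finset.sum_union (filter_le_disj n)]
  have hlt : ∑ p ∈ Finset.univ.filter (fun p : Fin n × Fin n => p.1 < p.2),
      (if p.1 = p.2 then 2*(W p.1 p.1)^2 else 2*((W p.1 p.2)^2 + (W p.2 p.1)^2)) * pm
      = ∑ p ∈ Finset.univ.filter (fun p : Fin n × Fin n => p.1 < p.2),
        (2*pm*(W p.1 p.2)^2 + 2*pm*(W p.2 p.1)^2) := by
    apply Finset.sum_congr rfl
    intro p hp
    simp only [Finset.mem_filter] at hp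
    rw [if_neg (ne_of_lt hp.2)]
    ring
  have heq : ∑ p ∈ Finset.univ.filter (fun p : Fin n × Fin n => p.1 = p.2),
      (if p.1 = p.2 then 2*(W p.1 p.1)^2 else 2*((W p.1 p.2)^2 + (W p.2 p.1)^2)) * pm
      = ∑ p ∈ Finset.univ.filter (fun p : Fin n × Fin n => p.1 = p.2),
        2*pm*(W p.1 p.2)^2 := by
    apply Finset.sum_congr rfl
    intro p hp
    simp only [Finset.mem_filter] at hp
    rw [if_pos hp.2, ← hp.2]
    ring
  rw [hlt, heq, Finset.sum_add_distrib]
  have hswap2 : ∑ p ∈ Finset.univ.filter (fun p : Fin n × Fin n => p.1 < p.2),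
      2*pm*(W p.2 p.1)^2
      = ∑ p ∈ Finset.univ.filter (fun p : Fin n × Fin n => ¬ p.1 ≤ p.2),
        2*pm*(W p.1 p.2)^2 := (sum_swap_lt (fun i j => 2*pm*(W i j)^2)).symm
  rw [hswap2]
  have htot : 2 * pm * ∑ i, ∑ j, (W i j)^2
      = ∑ p ∈ (Finset.univ : Finset (Fin n × Fin n)), 2*pm*(W p.1 p.2)^2 := by
    rw [Fintype.sum_prod_type, Finset.mul_sum]
    apply Finset.sum_congr rfl
    intro i _
    rw [Finset.mul_sum]
  rw [htot, ← Finset.sum_filter_add_sum_filter_not Finset.univ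
    (fun p : Fin n × Fin n => p.1 ≤ p.2), filter_le_split,
    Finset.sum_union (filter_le_disj n)]
  linarith

open Matrix in
lemma avg_left {n : ℕ} (S X : Matrix (Fin n) (Fin n) ℝ)
    (hS0 : ∀ i i', 0 ≤ S i i') (hS1 : ∀ i, ∑ i', S i i' = 1)
    (lo hi : ℝ) (hX : ∀ i j, lo ≤ X i j ∧ X i j ≤ hi) :
    ∀ i j, lo ≤ (S*X) i j ∧ (S*X) i j ≤ hi := by
  intro i j
  rw [Matrix.mul_apply]
  have hlo : ∑ i', S i i' * lo = lo := by rw [← Finset.sum_mul, hS1, one_mul]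
  have hhi : ∑ i', S i i' * hi = hi := by rw [← Finset.sum_mul, hS1, one_mul]
  constructor
  · rw [← hlo]
    exact Finset.sum_le_sum fun i' _ => mul_le_mul_of_nonneg_left (hX i' j).1 (hS0 i i')
  · rw [← hhi]
    exact Finset.sum_le_sum fun i' _ => mul_le_mul_of_nonneg_left (hX i' j).2 (hS0 i i')

open Matrix in
lemma avg_right {n : ℕ} (S X : Matrix (Fin n) (Fin n) ℝ)
    (hS0 : ∀ i i', 0 ≤ S i i') (hS1 : ∀ j, ∑ j', S j' j = 1)
    (lo hi : ℝ) (hX : ∀ i j, lo ≤ X i j ∧ X i j ≤ hi) :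
    ∀ i j, lo ≤ (X*S) i j ∧ (X*S) i j ≤ hi := by
  intro i j
  rw [Matrix.mul_apply]
  have hlo : ∑ j', lo * S j' j = lo := by rw [← Finset.mul_sum, hS1, mul_one]
  have hhi : ∑ j', hi * S j' j = hi := by rw [← Finset.mul_sum, hS1, mul_one]
  constructor
  · rw [← hlo]
    exact Finset.sum_le_sum fun j' _ => mul_le_mul_of_nonneg_right (hX i j').1 (hS0 j' j)
  · rw [← hhi]
    exact Finset.sum_le_sum fun j' _ => mul_le_mul_of_nonneg_right (hX i j').2 (hS0 j' j)

open Finset in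
lemma sum_layer {L n : ℕ} (l : Fin L) (f : Fin L × Fin n × Fin n → ℝ)
    (h0 : ∀ x : Fin L × Fin n × Fin n, x.1 ≠ l → f x = 0) :
    ∑ x ∈ Finset.univ.filter (fun x : Fin L × Fin n × Fin n => x.2.1 ≤ x.2.2), f x
      = ∑ p ∈ Finset.univ.filter (fun p : Fin n × Fin n => p.1 ≤ p.2), f (l, p) := by
  classical
  have step1 : ∑ x ∈ (Finset.univ.filter
        (fun x : Fin L × Fin n × Fin n => x.2.1 ≤ x.2.2)).filter (fun x => x.1 = l), f x
      = ∑ x ∈ Finset.univ.filter (fun x : Fin L × Fin n × Fin n => x.2.1 ≤ x.2.2), f x := by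
    apply Finset.sum_filter_of_ne
    intro x _ hf
    by_contra h
    exact hf (h0 x h)
  rw [← step1]
  apply Finset.sum_bij' (i := fun (x : Fin L × Fin n × Fin n) _ => x.2)
    (j := fun (p : Fin n × Fin n) _ => ((l, p) : Fin L × Fin n × Fin n))
  · intro a ha
    simp only [Finset.mem_filter, Finset.mem_univ, true_and] at ha ⊢
    exact ha.1
  · intro p hp
    simp only [Finset.mem_filter, Finset.mem_univ, true_and] at hp ⊢
    exact ⟨hp, trivial⟩
  · intro a ha
    simp only [Finset.mem_filter] at ha
    rw [← ha.2]
  · intro p _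
    rfl
  · intro a ha
    simp only [Finset.mem_filter] at ha
    rw [← ha.2]

open Finset in
lemma sum_subtype_pairs {L n : ℕ} (F : Fin L × Fin n × Fin n → ℝ) :
    ∑ q : {q : Fin L × Fin n × Fin n // q.2.1 ≤ q.2.2}, F q.1
      = ∑ x ∈ Finset.univ.filter (fun x : Fin L × Fin n × Fin n => x.2.1 ≤ x.2.2), F x :=
  (Finset.sum_subtype _ (fun x => by simp) F).symm


set_option maxHeartbeats 4000000 in
/-- Concentration of `‖Π_{T,K_m}(Q_*) ×_{2,3} Π_{T,K_m}(Δ)‖_F`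
in the Mixture Multilayer Stochastic Block Model. -/
theorem stmt18
    {n L M : ℕ} (hn : 0 < n) (hL : 0 < L) (hM : 0 < M)
    (K : Fin M → ℕ) (hK : ∀ m, 0 < K m)
    (pmax : ℝ) (hp0 : 0 < pmax) (hp1 : pmax ≤ 1)
    -- the partition of the layers and of the nodes
    (z : Fin L → Fin M) (hz : Function.Surjective z)
    (g : ∀ m : Fin M, Fin n → Fin (K m)) (hg : ∀ m, Function.Surjective (g m))
    -- the connectivity matrices
    (B : ∀ m : Fin M, Matrix (Fin (K m)) (Fin (K m)) ℝ)
    (hBsymm : ∀ m, (B m)ᵀ = B m)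
    (hBrange : ∀ m k k', B m k k' ∈ Set.Icc (0 : ℝ) pmax)
    -- membership matrices and the model quantities
    (Θ : ∀ m : Fin M, Matrix (Fin n) (Fin (K m)) ℝ)
    (hΘ : ∀ m i k, Θ m i k = if g m i = k then 1 else 0)
    (P : Fin L → Matrix (Fin n) (Fin n) ℝ)
    (hP : ∀ l, P l = Θ (z l) * B (z l) * (Θ (z l))ᵀ)
    (Q : Fin M → Matrix (Fin n) (Fin n) ℝ)
    (hQ : ∀ m, Q m =
      Real.sqrt ((Finset.univ.filter fun l => z l = m).card) • (Θ m * B m * (Θ m)ᵀ))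
    (U : ∀ m : Fin M, Matrix (Fin n) (Fin (K m)) ℝ)
    (hU : ∀ m i k, U m i k =
      (if g m i = k then 1 else 0) /
        Real.sqrt ((Finset.univ.filter fun i' => g m i' = k).card))
    (gmin : ℕ)
    (hgmin : gmin = sInf {c : ℕ | ∃ m k, c = (Finset.univ.filter fun i => g m i = k).card})
    (Kdot : ℕ) (hKdot : Kdot = ∑ m, K m)
    -- the probability space and the random adjacency tensor
    {Ω : Type} [MeasurableSpace Ω] (μ : Measure Ω) [IsProbabilityMeasure μ]
    (A : Ω → Fin L → Matrix (Fin n) (Fin n) ℝ)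
    (hmeas : ∀ l i j, Measurable fun ω => A ω l i j)
    (hsymm : ∀ ω l i j, A ω l i j = A ω l j i)
    (h01 : ∀ ω l i j, A ω l i j = 0 ∨ A ω l i j = 1)
    (hBer : ∀ l i j, μ {ω | A ω l i j = 1} = ENNReal.ofReal (P l i j))
    (hindep : ProbabilityTheory.iIndepFun
      (fun (q : {q : Fin L × Fin n × Fin n // q.2.1 ≤ q.2.2}) ω =>
        A ω q.1.1 q.1.2.1 q.1.2.2) μ) :
    ∀ (m : Fin M) (t : ℝ), 0 < t →
      μ {ω | 3 * t * n * L * Real.sqrt (pmax ^ 3) <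
          frobNorm (prod23 (piT (1 - U m * (U m)ᵀ) Q)
            (piT (1 - U m * (U m)ᵀ) (fun l => A ω l - P l)))} ≤
        ENNReal.ofReal (2 * Kdot * L *
          Real.exp (-(t ^ 2 / 2) / (1 + t / (3 * Real.sqrt (pmax * n * gmin))))) := by
  classical
  intro m t ht
  -- ## fiber cardinalities and gmin
  have hfib : ∀ (m' : Fin M) (k : Fin (K m')),
      0 < ((Finset.univ.filter fun i => g m' i = k)).card := by
    intro m' k
    obtain ⟨i, hi⟩ := hg m' k
    exact Finset.card_pos.2 ⟨i, Finset.mem_filter.2 ⟨Finset.mem_univ i, hi⟩⟩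
  have hgle : ∀ (m' : Fin M) (k : Fin (K m')),
      gmin ≤ ((Finset.univ.filter fun i => g m' i = k)).card := by
    intro m' k
    rw [hgmin]
    exact Nat.sInf_le ⟨m', k, rfl⟩
  have hgpos : 0 < gmin := by
    rw [hgmin]
    have hne : {c : ℕ | ∃ m' k, c = (Finset.univ.filter fun i => g m' i = k).card}.Nonempty :=
      ⟨_, ⟨m, ⟨0, hK m⟩, rfl⟩⟩
    obtain ⟨m', k', hc⟩ := Nat.sInf_mem hne
    rw [hc]
    exact hfib m' k'
  have hgn : gmin ≤ n := by
    refine le_trans (hgle m ⟨0, hK m⟩) ?_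
    calc ((Finset.univ.filter fun i => g m i = ⟨0, hK m⟩)).card
        ≤ (Finset.univ : Finset (Fin n)).card := Finset.card_filter_le _ _
      _ = n := by rw [Finset.card_univ, Fintype.card_fin]
  -- ## layer counts
  set Lc : Fin M → ℕ := fun m' => (Finset.univ.filter fun l => z l = m').card with hLcdef
  have hLcpos : ∀ m', 0 < Lc m' := by
    intro m'
    obtain ⟨l, hl⟩ := hz m'
    exact Finset.card_pos.2 ⟨l, Finset.mem_filter.2 ⟨Finset.mem_univ l, hl⟩⟩
  have hLsum : ∑ m', (Lc m' : ℝ) = L := by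
    have h := Finset.card_eq_sum_card_fiberwise
      (fun (x : Fin L) (_ : x ∈ Finset.univ) => Finset.mem_univ (z x))
    rw [Finset.card_univ, Fintype.card_fin] at h
    rw [show ∑ m', (Lc m' : ℝ) = ((∑ m', Lc m' : ℕ) : ℝ) by push_cast; rfl]
    rw [← h]
  -- ## matrix entries
  have hΘBΘ : ∀ (m' : Fin M) i j, (Θ m' * B m' * (Θ m')ᵀ) i j = B m' (g m' i) (g m' j) := by
    intro m' i j
    rw [Matrix.mul_apply]
    have hin : ∀ k', (Θ m' * B m') i k' = B m' (g m' i) k' := by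
      intro k'
      rw [Matrix.mul_apply]
      rw [Finset.sum_congr rfl (show ∀ k ∈ Finset.univ, Θ m' i k * B m' k k'
          = if g m' i = k then B m' k k' else 0 from fun k _ => by
        rw [hΘ, ite_mul, one_mul, zero_mul])]
      rw [Finset.sum_ite_eq]
      simp
    rw [Finset.sum_congr rfl (show ∀ k' ∈ Finset.univ, (Θ m' * B m') i k' * (Θ m')ᵀ k' j
        = if g m' j = k' then B m' (g m' i) k' else 0 from fun k' _ => by
      rw [hin k', Matrix.transpose_apply, hΘ, mul_ite, mul_one, mul_zero])]
    rw [Finset.sum_ite_eq]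
    simp
  have hPe : ∀ l i j, P l i j = B (z l) (g (z l) i) (g (z l) j) := by
    intro l i j
    rw [hP]
    exact hΘBΘ (z l) i j
  have hPicc : ∀ l i j, 0 ≤ P l i j ∧ P l i j ≤ pmax := by
    intro l i j
    rw [hPe]
    exact ⟨(hBrange _ _ _).1, (hBrange _ _ _).2⟩
  have hPsym : ∀ l i j, P l i j = P l j i := by
    intro l i j
    rw [hPe, hPe]
    conv_lhs => rw [← hBsymm (z l)]
    rw [Matrix.transpose_apply]
  have hQe : ∀ (m' : Fin M) i j,
      Q m' i j = Real.sqrt (Lc m') * B m' (g m' i) (g m' j) := by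
    intro m' i j
    rw [hQ]
    rw [Matrix.smul_apply, smul_eq_mul, hΘBΘ]
  set qv : Fin M → ℝ := fun m' => Real.sqrt (Lc m') * pmax with hqvdef
  have hqvpos : ∀ m', 0 < qv m' := by
    intro m'
    apply mul_pos _ hp0
    apply Real.sqrt_pos.2
    exact_mod_cast hLcpos m'
  have hQicc : ∀ (m' : Fin M) i j, 0 ≤ Q m' i j ∧ Q m' i j ≤ qv m' := by
    intro m' i j
    rw [hQe]
    constructor
    · exact mul_nonneg (Real.sqrt_nonneg _) (hBrange _ _ _).1
    · exact mul_le_mul_of_nonneg_left (hBrange _ _ _).2 (Real.sqrt_nonneg _)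
  -- ## the projection matrix S
  set S : Matrix (Fin n) (Fin n) ℝ := U m * (U m)ᵀ with hSdef
  have hSe : ∀ i i', S i i' = if g m i = g m i'
      then 1/(((Finset.univ.filter fun x => g m x = g m i).card : ℝ)) else 0 := by
    intro i i'
    show (U m * (U m)ᵀ) i i' = _
    rw [Matrix.mul_apply]
    have hterm : ∀ k, U m i k * (U m)ᵀ k i'
        = if g m i = k ∧ g m i' = k
          then 1/(((Finset.univ.filter fun x => g m x = k).card : ℝ)) else 0 := by
      intro k
      rw [Matrix.transpose_apply, hU, hU]
      by_cases h1 : g m i = k <;> by_cases h2 : g m i' = k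
      · rw [if_pos h1, if_pos h2, if_pos ⟨h1, h2⟩, div_mul_div_comm, one_mul,
          Real.mul_self_sqrt (Nat.cast_nonneg _)]
      · rw [if_pos h1, if_neg h2, if_neg (by tauto)]
        simp
      · rw [if_neg h1, if_pos h2, if_neg (by tauto)]
        simp
      · rw [if_neg h1, if_neg h2, if_neg (by tauto)]
        simp
    rw [Finset.sum_congr rfl (fun k _ => hterm k)]
    by_cases hgg : g m i = g m i'
    · rw [if_pos hgg]
      rw [Finset.sum_congr rfl (show ∀ k ∈ Finset.univ,
          (if g m i = k ∧ g m i' = k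
            then 1/(((Finset.univ.filter fun x => g m x = k).card : ℝ)) else 0)
          = (if g m i = k
            then 1/(((Finset.univ.filter fun x => g m x = k).card : ℝ)) else 0) from
        fun k _ => by simp only [← hgg, and_self])]
      rw [Finset.sum_ite_eq]
      simp
    · rw [if_neg hgg]
      apply Finset.sum_eq_zero
      intro k _
      rw [if_neg]
      rintro ⟨ha, hb⟩
      exact hgg (ha.trans hb.symm)
  have hS0 : ∀ i i', 0 ≤ S i i' := by
    intro i i'
    rw [hSe]
    split
    · positivity
    · exact le_refl 0
  have hSsym' : ∀ i i', S i i' = S i' i := by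
    intro i i'
    rw [hSe, hSe]
    by_cases hgg : g m i = g m i'
    · rw [if_pos hgg, if_pos hgg.symm, hgg]
    · rw [if_neg hgg, if_neg (fun h => hgg h.symm)]
  have hSrow : ∀ i, ∑ i', S i i' = 1 := by
    intro i
    rw [Finset.sum_congr rfl (fun i' _ => hSe i i')]
    rw [← Finset.sum_filter, Finset.sum_const, nsmul_eq_mul]
    have hcard : (Finset.univ.filter fun i' => g m i = g m i').card
        = (Finset.univ.filter fun x => g m x = g m i).card := by
      congr 1
      apply Finset.filter_congr
      intro x _
      simp [eq_comm]
    rw [hcard]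
    have hne : (((Finset.univ.filter fun x => g m x = g m i).card : ℝ)) ≠ 0 := by
      have := hfib m (g m i)
      positivity
    field_simp
  have hScol : ∀ j, ∑ j', S j' j = 1 := by
    intro j
    rw [Finset.sum_congr rfl (fun j' _ => hSsym' j' j)]
    exact hSrow j
  have hSt : Sᵀ = S := by
    rw [hSdef, Matrix.transpose_mul, Matrix.transpose_transpose]
  have hUtU : (U m)ᵀ * U m = 1 := by
    ext k k'
    rw [Matrix.mul_apply]
    simp only [Matrix.transpose_apply]
    by_cases hkk : k = k'
    · subst hkk
      rw [Finset.sum_congr rfl (show ∀ i ∈ Finset.univ, U m i k * U m i k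
          = if g m i = k
            then 1/(((Finset.univ.filter fun x => g m x = k).card : ℝ)) else 0 from by
        intro i _
        rw [hU]
        by_cases h : g m i = k
        · rw [if_pos h, if_pos h, div_mul_div_comm, one_mul,
            Real.mul_self_sqrt (Nat.cast_nonneg _)]
        · rw [if_neg h, if_neg h]
          simp)]
      rw [← Finset.sum_filter, Finset.sum_const, nsmul_eq_mul]
      have hne : (((Finset.univ.filter fun x => g m x = k).card : ℝ)) ≠ 0 := by
        have := hfib m k
        positivity
      rw [Matrix.one_apply_eq]
      field_simp
    · rw [Matrix.one_apply_ne hkk]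
      apply Finset.sum_eq_zero
      intro i _
      rw [hU, hU]
      by_cases h1 : g m i = k
      · have h2 : g m i ≠ k' := fun h => hkk (h1.symm.trans h)
        rw [if_neg h2]
        simp
      · rw [if_neg h1]
        simp
  have hSS : S * S = S := by
    rw [hSdef, Matrix.mul_assoc, ← Matrix.mul_assoc ((U m)ᵀ) (U m) ((U m)ᵀ), hUtU,
      Matrix.one_mul]
  -- ## the matrices W
  have hQproj : ∀ m', Q m' - (1 - S) * Q m' * (1 - S)
      = S * Q m' + Q m' * S - S * Q m' * S := by
    intro m'
    calc Q m' - (1-S) * Q m' * (1-S)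
        = Q m' - ((Q m' - S * Q m') - (Q m' * S - S * Q m' * S)) := by
          rw [Matrix.sub_mul, Matrix.one_mul, Matrix.mul_sub, Matrix.mul_one, Matrix.sub_mul]
      _ = S * Q m' + Q m' * S - S * Q m' * S := by abel
  have hSQb : ∀ (m' : Fin M) i j, 0 ≤ (S * Q m') i j ∧ (S * Q m') i j ≤ qv m' :=
    fun m' => avg_left S (Q m') hS0 hSrow 0 (qv m') (hQicc m')
  have hQSb : ∀ (m' : Fin M) i j, 0 ≤ (Q m' * S) i j ∧ (Q m' * S) i j ≤ qv m' :=
    fun m' => avg_right S (Q m') hS0 hScol 0 (qv m') (hQicc m')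
  have hSQSb : ∀ (m' : Fin M) i j, 0 ≤ (S * Q m' * S) i j ∧ (S * Q m' * S) i j ≤ qv m' :=
    fun m' => avg_right S (S * Q m') hS0 hScol 0 (qv m') (hSQb m')
  have hWabs : ∀ (m' : Fin M) i j,
      |(S * Q m' + Q m' * S - S * Q m' * S) i j| ≤ 2 * qv m' := by
    intro m' i j
    have h1 := hSQb m' i j
    have h2 := hQSb m' i j
    have h3 := hSQSb m' i j
    rw [Matrix.sub_apply, Matrix.add_apply, abs_le]
    constructor <;> linarith
  -- ## the constants
  set Gv : ℝ := Real.sqrt (pmax * n * gmin) with hGvdef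
  have hgminR : (0:ℝ) < (gmin : ℝ) := by exact_mod_cast hgpos
  have hnR : (0:ℝ) < (n : ℝ) := by exact_mod_cast hn
  have hGpos : 0 < Gv := Real.sqrt_pos.2 (mul_pos (mul_pos hp0 hnR) hgminR)
  set bnd : Fin M → ℝ := fun m' =>
    3 * Real.sqrt (Lc m') * pmax * Real.sqrt ((n:ℝ) / gmin) with hbnddef
  have hbndpos : ∀ m', 0 < bnd m' := by
    intro m'
    have h1 : (0:ℝ) < Real.sqrt (Lc m') := Real.sqrt_pos.2 (by exact_mod_cast hLcpos m')
    have h2 : (0:ℝ) < Real.sqrt ((n:ℝ)/gmin) := Real.sqrt_pos.2 (div_pos hnR hgminR)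
    exact mul_pos (mul_pos (mul_pos (by norm_num) h1) hp0) h2
  set sv : Fin M → ℝ := fun m' => t * bnd m' * Gv with hsvdef
  have hsvpos : ∀ m', 0 < sv m' :=
    fun m' => mul_pos (mul_pos ht (hbndpos m')) hGpos
  set Vv : Fin M → ℝ := fun m' => 9 * (Lc m' : ℝ) * pmax^3 * n^2 with hVvdef
  have hVvpos : ∀ m', 0 < Vv m' := by
    intro m'
    have h : (0:ℝ) < (Lc m' : ℝ) := by exact_mod_cast hLcpos m'
    exact mul_pos (mul_pos (mul_pos (by norm_num) h) (pow_pos hp0 3)) (pow_pos hnR 2)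
  -- the coefficient bound
  have hWcoef : ∀ (m' : Fin M) i j,
      2 * |(S * Q m' + Q m' * S - S * Q m' * S) i j| ≤ bnd m' := by
    rcases le_or_gt (16 * gmin) (9 * n) with hcs | hcs
    · intro m' i j
      have h1 := hWabs m' i j
      have hq : (0:ℝ) ≤ Real.sqrt ((Lc m':ℝ)) * pmax :=
        mul_nonneg (Real.sqrt_nonneg _) hp0.le
      have h43 : (4:ℝ)/3 ≤ Real.sqrt ((n:ℝ)/gmin) := by
        rw [show (4/3:ℝ) = Real.sqrt ((4/3)^2) from (Real.sqrt_sq (by norm_num)).symm]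
        apply Real.sqrt_le_sqrt
        rw [le_div_iff₀ hgminR]
        have hcR : (16:ℝ)*(gmin:ℝ) ≤ 9*(n:ℝ) := by exact_mod_cast hcs
        nlinarith
      have hb : 4 * (Real.sqrt ((Lc m':ℝ)) * pmax) ≤ bnd m' := by
        show 4 * (Real.sqrt ((Lc m':ℝ)) * pmax)
          ≤ 3 * Real.sqrt ((Lc m':ℝ)) * pmax * Real.sqrt ((n:ℝ)/gmin)
        nlinarith
      have hqv' : qv m' = Real.sqrt ((Lc m':ℝ)) * pmax := rfl
      rw [hqv'] at h1
      linarith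
    · have hn2g : n < 2 * gmin := by omega
      have hconst : ∀ (m'' : Fin M) i i', g m'' i = g m'' i' := by
        intro m'' i i'
        by_contra hne
        have hd : Disjoint (Finset.univ.filter fun x => g m'' x = g m'' i)
            (Finset.univ.filter fun x => g m'' x = g m'' i') := by
          rw [Finset.disjoint_left]
          intro a ha hb
          simp only [Finset.mem_filter] at ha hb
          exact hne (ha.2.symm.trans hb.2)
        have hcard := Finset.card_union_of_disjoint hd
        have hle : ((Finset.univ.filter fun x => g m'' x = g m'' i)
            ∪ (Finset.univ.filter fun x => g m'' x = g m'' i')).card ≤ n := by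
          refine le_trans (Finset.card_le_univ _) ?_
          simp
        have hg1 := hgle m'' (g m'' i)
        have hg2 := hgle m'' (g m'' i')
        omega
      have hQc : ∀ (m' : Fin M) i j i' j', Q m' i j = Q m' i' j' := by
        intro m' i j i' j'
        rw [hQe, hQe, hconst m' i i', hconst m' j j']
      have hSQm : ∀ m', S * Q m' = Q m' := by
        intro m'
        ext i j
        rw [Matrix.mul_apply]
        rw [Finset.sum_congr rfl (show ∀ i' ∈ Finset.univ,
            S i i' * Q m' i' j = S i i' * Q m' i j from
          fun i' _ => by rw [hQc m' i' j i j])]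
        rw [← Finset.sum_mul, hSrow, one_mul]
      have hQSm : ∀ m', Q m' * S = Q m' := by
        intro m'
        ext i j
        rw [Matrix.mul_apply]
        rw [Finset.sum_congr rfl (show ∀ j' ∈ Finset.univ,
            Q m' i j' * S j' j = Q m' i j * S j' j from
          fun j' _ => by rw [hQc m' i j' i j])]
        rw [← Finset.mul_sum, hScol, mul_one]
      intro m' i j
      have hE : S * Q m' + Q m' * S - S * Q m' * S = Q m' := by
        rw [hSQm m', hQSm m', add_sub_cancel_right]
      rw [hE]
      have hq := hQicc m' i j
      have hone : (1:ℝ) ≤ Real.sqrt ((n:ℝ)/gmin) := by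
        rw [show (1:ℝ) = Real.sqrt 1 from Real.sqrt_one.symm]
        apply Real.sqrt_le_sqrt
        rw [le_div_iff₀ hgminR, one_mul]
        exact_mod_cast hgn
      have hqv' : qv m' = Real.sqrt ((Lc m':ℝ)) * pmax := rfl
      rw [hqv'] at hq
      have habs : |Q m' i j| ≤ Real.sqrt ((Lc m':ℝ)) * pmax := by
        rw [abs_of_nonneg hq.1]
        exact hq.2
      have hqnn : (0:ℝ) ≤ Real.sqrt ((Lc m':ℝ)) * pmax :=
        mul_nonneg (Real.sqrt_nonneg _) hp0.le
      show 2 * |Q m' i j| ≤ 3 * Real.sqrt ((Lc m':ℝ)) * pmax * Real.sqrt ((n:ℝ)/gmin)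
      nlinarith [abs_nonneg (Q m' i j)]
  -- exponent identity
  have hVeq : ∀ m', Vv m' = (bnd m')^2 * Gv^2 := by
    intro m'
    have e1 : Real.sqrt ((Lc m':ℝ))^2 = (Lc m':ℝ) := Real.sq_sqrt (Nat.cast_nonneg _)
    have e2 : Real.sqrt ((n:ℝ)/gmin)^2 = (n:ℝ)/gmin :=
      Real.sq_sqrt (div_nonneg hnR.le hgminR.le)
    have e3 : Gv^2 = pmax * n * gmin :=
      Real.sq_sqrt (mul_nonneg (mul_nonneg hp0.le hnR.le) hgminR.le)
    show 9 * (Lc m' : ℝ) * pmax^3 * n^2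
      = (3 * Real.sqrt ((Lc m':ℝ)) * pmax * Real.sqrt ((n:ℝ)/gmin))^2 * Gv^2
    rw [show (3 * Real.sqrt ((Lc m':ℝ)) * pmax * Real.sqrt ((n:ℝ)/gmin))^2
        = 9 * Real.sqrt ((Lc m':ℝ))^2 * pmax^2 * Real.sqrt ((n:ℝ)/gmin)^2 from by ring,
      e1, e2, e3]
    field_simp
  have hexp_eq : ∀ m', -(sv m')^2 / (2*(Vv m' + bnd m' * sv m' / 3))
      = -(t^2/2) / (1 + t/(3*Gv)) := by
    intro m'
    rw [hVeq m']
    have hbne := (hbndpos m').ne'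
    have hgne := hGpos.ne'
    show -(t * bnd m' * Gv)^2 / (2*((bnd m')^2 * Gv^2 + bnd m' * (t * bnd m' * Gv) / 3))
      = -(t^2/2) / (1 + t/(3*Gv))
    have h1 : 0 < (bnd m')^2 * Gv^2 := mul_pos (pow_pos (hbndpos m') 2) (pow_pos hGpos 2)
    have h2 : 0 < bnd m' * (t * bnd m' * Gv) / 3 := by
      apply div_pos _ (by norm_num)
      exact mul_pos (hbndpos m') (mul_pos (mul_pos ht (hbndpos m')) hGpos)
    have h3 : 0 < t/(3*Gv) := div_pos ht (by linarith)
    have hne1 : (2*((bnd m')^2 * Gv^2 + bnd m' * (t * bnd m' * Gv) / 3)) ≠ 0 := by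
      have h4 : 0 < 2*((bnd m')^2 * Gv^2 + bnd m' * (t * bnd m' * Gv) / 3) := by linarith
      exact h4.ne'
    have hne2 : (1 + t/(3*Gv)) ≠ 0 := by
      have h5 : (0:ℝ) < 1 + t/(3*Gv) := by linarith
      exact h5.ne'
    rw [div_eq_div_iff hne1 hne2]
    field_simp
  -- ## abbreviations for the random variables
  set Em : Fin M → Matrix (Fin n) (Fin n) ℝ :=
    fun m' => S * Q m' + Q m' * S - S * Q m' * S with hEmdef
  -- the index type
  set χf : {q : Fin L × Fin n × Fin n // q.2.1 ≤ q.2.2} → Ω → ℝ :=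
    fun q ω => A ω q.1.1 q.1.2.1 q.1.2.2 with hχdef
  set ρf : {q : Fin L × Fin n × Fin n // q.2.1 ≤ q.2.2} → ℝ :=
    fun q => P q.1.1 q.1.2.1 q.1.2.2 with hρdef
  set cf : Fin M → Fin L → {q : Fin L × Fin n × Fin n // q.2.1 ≤ q.2.2} → ℝ :=
    fun m' l q => if q.1.1 = l
      then (if q.1.2.1 = q.1.2.2 then Em m' q.1.2.1 q.1.2.1
        else Em m' q.1.2.1 q.1.2.2 + Em m' q.1.2.2 q.1.2.1) else 0 with hcfdef
  -- ## Bernstein bound for each pair (m', l)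
  have hBern : ∀ (m' : Fin M) (l : Fin L),
      μ {ω | sv m' < |∑ q, cf m' l q * (χf q ω - ρf q)|}
        ≤ ENNReal.ofReal (2 * Real.exp
            (-(sv m')^2 / (2*(Vv m' + bnd m' * sv m' / 3)))) := by
    intro m' l
    have hEb : ∀ i j, 2 * |Em m' i j| ≤ bnd m' := fun i j => hWcoef m' i j
    have hE2q : ∀ i j, |Em m' i j| ≤ 2 * qv m' := fun i j => hWabs m' i j
    apply bernstein_twosided μ χf (fun q => hmeas _ _ _) (fun q ω => h01 ω _ _ _)
      ρf (fun q => ⟨(hPicc _ _ _).1, le_trans (hPicc _ _ _).2 hp1⟩)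
      (fun q => hBer _ _ _) hindep (cf m' l) (bnd m') (Vv m') (sv m')
      (hbndpos m') ?_ ?_ (hVvpos m') (hsvpos m').le
    · -- coefficient bound
      intro q
      show |if q.1.1 = l then _ else 0| ≤ bnd m'
      by_cases hq : q.1.1 = l
      · rw [if_pos hq]
        by_cases hd : q.1.2.1 = q.1.2.2
        · rw [if_pos hd]
          have := hEb q.1.2.1 q.1.2.1
          have := hbndpos m'
          have := abs_nonneg (Em m' q.1.2.1 q.1.2.1)
          linarith
        · rw [if_neg hd]
          have h1 := hEb q.1.2.1 q.1.2.2
          have h2 := hEb q.1.2.2 q.1.2.1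
          calc |Em m' q.1.2.1 q.1.2.2 + Em m' q.1.2.2 q.1.2.1|
              ≤ |Em m' q.1.2.1 q.1.2.2| + |Em m' q.1.2.2 q.1.2.1| := abs_add_le _ _
            _ ≤ bnd m' := by linarith
      · rw [if_neg hq, abs_zero]
        exact (hbndpos m').le
    · -- variance bound
      have hsub : ∑ q : {q : Fin L × Fin n × Fin n // q.2.1 ≤ q.2.2},
          (cf m' l q)^2 * ρf q
          = ∑ x ∈ Finset.univ.filter
              (fun x : Fin L × Fin n × Fin n => x.2.1 ≤ x.2.2),
            (if x.1 = l then (if x.2.1 = x.2.2 then Em m' x.2.1 x.2.1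
              else Em m' x.2.1 x.2.2 + Em m' x.2.2 x.2.1) else 0)^2
              * P x.1 x.2.1 x.2.2 :=
        sum_subtype_pairs (fun x => (if x.1 = l
          then (if x.2.1 = x.2.2 then Em m' x.2.1 x.2.1
            else Em m' x.2.1 x.2.2 + Em m' x.2.2 x.2.1) else 0)^2
              * P x.1 x.2.1 x.2.2)
      rw [hsub, sum_layer l _ (fun x hx => by rw [if_neg hx]; ring)]
      have hred : ∑ p ∈ Finset.univ.filter (fun p : Fin n × Fin n => p.1 ≤ p.2),
          (if (l, p).1 = l then (if (l, p).2.1 = (l, p).2.2 then Em m' (l, p).2.1 (l, p).2.1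
            else Em m' (l, p).2.1 (l, p).2.2 + Em m' (l, p).2.2 (l, p).2.1) else 0)^2
            * P (l, p).1 (l, p).2.1 (l, p).2.2
          = ∑ p ∈ Finset.univ.filter (fun p : Fin n × Fin n => p.1 ≤ p.2),
          (if p.1 = p.2 then Em m' p.1 p.1
            else Em m' p.1 p.2 + Em m' p.2 p.1)^2 * P l p.1 p.2 := by
        apply Finset.sum_congr rfl
        intro p _
        rw [if_pos rfl]
      rw [hred]
      refine le_trans (sum_sym_pairs_sq (Em m') (fun i j => P l i j) pmax hp0.le
        (fun i j => hPicc l i j)) ?_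
      -- 2 * pmax * ∑∑ (Em)² ≤ Vv m'
      have hq2 : ∀ i j, (Em m' i j)^2 ≤ (2 * qv m')^2 := by
        intro i j
        rw [← sq_abs]
        apply pow_le_pow_left₀ (abs_nonneg _) (hE2q i j)
      have hsumsq : ∑ i, ∑ j, (Em m' i j)^2 ≤ (n:ℝ)^2 * (2 * qv m')^2 := by
        calc ∑ i, ∑ j, (Em m' i j)^2 ≤ ∑ (_i : Fin n), ∑ (_j : Fin n), (2 * qv m')^2 :=
              Finset.sum_le_sum (fun i _ => Finset.sum_le_sum (fun j _ => hq2 i j))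
          _ = (n:ℝ)^2 * (2 * qv m')^2 := by
              rw [Finset.sum_const, Finset.sum_const, Finset.card_univ, Fintype.card_fin,
                nsmul_eq_mul, nsmul_eq_mul]
              ring
      have hqv2 : (qv m')^2 = (Lc m' : ℝ) * pmax^2 := by
        show (Real.sqrt ((Lc m':ℝ)) * pmax)^2 = (Lc m' : ℝ) * pmax^2
        rw [mul_pow, Real.sq_sqrt (Nat.cast_nonneg _)]
      have hLcnn : (0:ℝ) ≤ (Lc m' : ℝ) := Nat.cast_nonneg _
      calc 2 * pmax * ∑ i, ∑ j, (Em m' i j)^2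
          ≤ 2 * pmax * ((n:ℝ)^2 * (2 * qv m')^2) := by
            apply mul_le_mul_of_nonneg_left hsumsq (by positivity)
        _ = 8 * (Lc m' : ℝ) * pmax^3 * n^2 := by
            rw [show (2 * qv m')^2 = 4 * (qv m')^2 from by ring, hqv2]
            ring
        _ ≤ Vv m' := by
            show _ ≤ 9 * (Lc m' : ℝ) * pmax^3 * n^2
            nlinarith [mul_nonneg (mul_nonneg hLcnn (pow_pos hp0 3).le) (pow_pos hnR 2).le]
  -- ## pointwise identity
  have hIdent : ∀ (ω : Ω) (m' : Fin M) (l : Fin L),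
      prod23 (piT (1 - S) Q) (piT (1 - S) (fun l' => A ω l' - P l')) m' l
        = ∑ q, cf m' l q * (χf q ω - ρf q) := by
    intro ω m' l
    have hΔsym : ∀ i j, (A ω l - P l) i j = (A ω l - P l) j i := by
      intro i j
      rw [Matrix.sub_apply, Matrix.sub_apply, hsymm ω l i j, hPsym l i j]
    have hstep1 : prod23 (piT (1 - S) Q) (piT (1 - S) (fun l' => A ω l' - P l')) m' l
        = ((Q m' - (1-S) * Q m' * (1-S)) *
            ((A ω l - P l) - (1-S) * (A ω l - P l) * (1-S))ᵀ).trace := rfl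
    rw [hstep1, trace_proj S (Q m') (A ω l - P l) hSt hSS, trace_as_sum, hQproj m']
    rw [← sum_sym_pairs (Em m') (A ω l - P l) hΔsym]
    have hsub : ∑ q : {q : Fin L × Fin n × Fin n // q.2.1 ≤ q.2.2},
        cf m' l q * (χf q ω - ρf q)
        = ∑ x ∈ Finset.univ.filter
            (fun x : Fin L × Fin n × Fin n => x.2.1 ≤ x.2.2),
          (if x.1 = l then (if x.2.1 = x.2.2 then Em m' x.2.1 x.2.1
            else Em m' x.2.1 x.2.2 + Em m' x.2.2 x.2.1) else 0)
            * (A ω x.1 x.2.1 x.2.2 - P x.1 x.2.1 x.2.2) :=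
      sum_subtype_pairs (fun x => (if x.1 = l
        then (if x.2.1 = x.2.2 then Em m' x.2.1 x.2.1
          else Em m' x.2.1 x.2.2 + Em m' x.2.2 x.2.1) else 0)
            * (A ω x.1 x.2.1 x.2.2 - P x.1 x.2.1 x.2.2))
    rw [hsub, sum_layer l _ (fun x hx => by rw [if_neg hx]; ring)]
    apply Finset.sum_congr rfl
    intro p _
    rw [if_pos rfl, Matrix.sub_apply]
  -- ## event inclusion
  have hsub : {ω | 3 * t * n * L * Real.sqrt (pmax ^ 3) <
        frobNorm (prod23 (piT (1 - S) Q) (piT (1 - S) (fun l => A ω l - P l)))}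
      ⊆ ⋃ pr : Fin M × Fin L,
        {ω | sv pr.1 < |∑ q, cf pr.1 pr.2 q * (χf q ω - ρf q)|} := by
    intro ω hω
    by_contra hnot
    simp only [Set.mem_iUnion, not_exists] at hnot
    have hent : ∀ (m' : Fin M) (l : Fin L),
        |prod23 (piT (1 - S) Q) (piT (1 - S) (fun l' => A ω l' - P l')) m' l| ≤ sv m' := by
      intro m' l
      have h := hnot (m', l)
      rw [Set.mem_setOf_eq, not_lt] at h
      rw [hIdent ω m' l]
      exact h
    rw [Set.mem_setOf_eq] at hω
    set X := prod23 (piT (1 - S) Q) (piT (1 - S) (fun l' => A ω l' - P l')) with hXdef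
    have hsv2 : ∀ i : Fin M, (sv i)^2 = t^2 * Vv i := by
      intro i
      rw [hVeq i]
      show (t * bnd i * Gv)^2 = t^2 * ((bnd i)^2 * Gv^2)
      ring
    have hsum : ∑ i, ∑ j, (X i j)^2 ≤ 9 * t^2 * pmax^3 * n^2 * L^2 := by
      have h1 : ∀ (i : Fin M) (j : Fin L), (X i j)^2 ≤ (sv i)^2 := by
        intro i j
        rw [← sq_abs]
        apply pow_le_pow_left₀ (abs_nonneg _) (hent i j)
      calc ∑ i, ∑ j, (X i j)^2 ≤ ∑ i, ∑ (_j : Fin L), (sv i)^2 :=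
            Finset.sum_le_sum (fun i _ => Finset.sum_le_sum (fun j _ => h1 i j))
        _ = ∑ i, (L:ℝ) * (sv i)^2 := by
            apply Finset.sum_congr rfl
            intro i _
            rw [Finset.sum_const, Finset.card_univ, Fintype.card_fin, nsmul_eq_mul]
        _ = (L:ℝ) * (t^2 * ∑ i, Vv i) := by
            rw [← Finset.mul_sum]
            congr 1
            rw [Finset.mul_sum]
            exact Finset.sum_congr rfl (fun i _ => hsv2 i)
        _ = 9 * t^2 * pmax^3 * n^2 * L^2 := by
            have : ∑ i, Vv i = 9 * pmax^3 * n^2 * (L:ℝ) := by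
              calc ∑ i, Vv i = ∑ i, 9 * (Lc i : ℝ) * pmax^3 * n^2 := rfl
                _ = 9 * pmax^3 * n^2 * ∑ i, (Lc i : ℝ) := by
                    rw [Finset.mul_sum]
                    apply Finset.sum_congr rfl
                    intro i _
                    ring
                _ = 9 * pmax^3 * n^2 * (L:ℝ) := by rw [hLsum]
            rw [this]
            ring
    have hfrob : frobNorm X ≤ 3 * t * n * L * Real.sqrt (pmax ^ 3) := by
      have h2 : frobNorm X ≤ Real.sqrt (9 * t^2 * pmax^3 * n^2 * L^2) :=
        Real.sqrt_le_sqrt hsum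
      refine h2.trans ?_
      rw [show 9 * t^2 * pmax^3 * (n:ℝ)^2 * (L:ℝ)^2
          = (3 * t * n * L)^2 * pmax^3 from by ring]
      rw [Real.sqrt_mul (sq_nonneg _), Real.sqrt_sq (by positivity)]
    exact absurd hω (not_lt.2 hfrob)
  -- ## union bound
  have hMK : (M:ℝ) ≤ (Kdot:ℝ) := by
    have : M ≤ Kdot := by
      rw [hKdot]
      calc M = ∑ _m' : Fin M, 1 := by rw [Finset.sum_const, Finset.card_univ,
            Fintype.card_fin, smul_eq_mul, mul_one]
        _ ≤ ∑ m', K m' := Finset.sum_le_sum (fun m' _ => hK m')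
    exact_mod_cast this
  have hexp_pos : 0 < Real.exp (-(t ^ 2 / 2) / (1 + t / (3 * Gv))) := Real.exp_pos _
  calc μ {ω | 3 * t * n * L * Real.sqrt (pmax ^ 3) <
        frobNorm (prod23 (piT (1 - S) Q) (piT (1 - S) (fun l => A ω l - P l)))}
      ≤ μ (⋃ pr : Fin M × Fin L,
          {ω | sv pr.1 < |∑ q, cf pr.1 pr.2 q * (χf q ω - ρf q)|}) := measure_mono hsub
    _ ≤ ∑' pr : Fin M × Fin L,
          μ {ω | sv pr.1 < |∑ q, cf pr.1 pr.2 q * (χf q ω - ρf q)|} := measure_iUnion_le _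
    _ = ∑ pr : Fin M × Fin L,
          μ {ω | sv pr.1 < |∑ q, cf pr.1 pr.2 q * (χf q ω - ρf q)|} := tsum_fintype _
    _ ≤ ∑ _pr : Fin M × Fin L, ENNReal.ofReal
          (2 * Real.exp (-(t ^ 2 / 2) / (1 + t / (3 * Gv)))) := by
        apply Finset.sum_le_sum
        intro pr _
        refine le_trans (hBern pr.1 pr.2) ?_
        apply ENNReal.ofReal_le_ofReal
        rw [show -(sv pr.1)^2 / (2*(Vv pr.1 + bnd pr.1 * sv pr.1 / 3))
            = -(t^2/2) / (1 + t/(3*Gv)) from hexp_eq pr.1]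
    _ = (M * L : ℕ) • ENNReal.ofReal
          (2 * Real.exp (-(t ^ 2 / 2) / (1 + t / (3 * Gv)))) := by
        rw [Finset.sum_const, Finset.card_univ, Fintype.card_prod,
          Fintype.card_fin, Fintype.card_fin]
    _ ≤ ENNReal.ofReal (2 * Kdot * L *
          Real.exp (-(t ^ 2 / 2) / (1 + t / (3 * Gv)))) := by
        rw [nsmul_eq_mul]
        rw [show ((M * L : ℕ) : ENNReal) = ENNReal.ofReal ((M * L : ℕ) : ℝ) from
          (ENNReal.ofReal_natCast _).symm]
        rw [← ENNReal.ofReal_mul (Nat.cast_nonneg _)]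
        apply ENNReal.ofReal_le_ofReal
        push_cast
        have h6 : (0:ℝ) ≤ ((Kdot:ℝ) - (M:ℝ)) * (L:ℝ)
            * Real.exp (-(t ^ 2 / 2) / (1 + t / (3 * Gv))) :=
          mul_nonneg (mul_nonneg (sub_nonneg.2 hMK) (Nat.cast_nonneg L)) hexp_pos.le
        nlinarith [h6]
end
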